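/- arXiv:2005.00312 — 4 statements merged into one kernel-verified Lean document; each statement's English description precedes it below -/
import Mathlib

section
/- The function Φ₁(z,τ) is holomorphic on ℂ away from the lattice L_τ = ℤ + ℤτ, and its set of poles is exactly L_τ. -/
/- STATEMENT 5: Φ₁(·,τ) is holomorphic on ℂ away from the lattice L_τ = ℤ+ℤτ,
   and its set of poles is exactly L_τ (it blows up precisely at the lattice points). -/

open Complex Real

noncomputable section

def qhex (τ : ℂ) : ℂ := Complex.exp ((π : ℂ) * I * τ)

def qex (τ : ℂ) : ℂ := Complex.exp (2 * (π : ℂ) * I * τ)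

def phiNumF (τ z : ℂ) (n : ℕ) : ℂ :=
  (1 + qhex τ ^ (2 * n + 1) * Complex.exp (2 * (π : ℂ) * I * z)) *
    (1 + qhex τ ^ (2 * n + 1) * Complex.exp (-(2 * (π : ℂ) * I * z)))

def phiDenF (τ z : ℂ) (n : ℕ) : ℂ :=
  (1 - qex τ ^ (n + 1) * Complex.exp (2 * (π : ℂ) * I * z)) *
    (1 - qex τ ^ (n + 1) * Complex.exp (-(2 * (π : ℂ) * I * z)))

def Phi1 (τ z : ℂ) : ℂ :=
  (Complex.exp (-((π : ℂ) * I * z)) - Complex.exp ((π : ℂ) * I * z))⁻¹ *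
    ((∏' n : ℕ, phiNumF τ z n) / (∏' n : ℕ, phiDenF τ z n))

/-- The lattice L_τ = ℤ + ℤτ. -/
def lattice (τ : ℂ) : Set ℂ := {z : ℂ | ∃ m n : ℤ, z = (m : ℂ) + (n : ℂ) * τ}

open Filter



-- if a factor is zero, HasProd 0
lemma aux_hasProd_zero {g : ℕ → ℂ} (h : ∃ n, g n = 0) : HasProd g 0 := by
  obtain ⟨n, hn⟩ := h
  have : ∀ s : Finset ℕ, {n} ≤ s → (∏ i ∈ s, g i) = 0 := fun s hs =>
    Finset.prod_eq_zero (hs (Finset.mem_singleton_self n)) hn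
  unfold HasProd
  refine Tendsto.congr' ?_ tendsto_const_nhds
  filter_upwards [Filter.eventually_ge_atTop ({n} : Finset ℕ)] with s hs
  exact (this s hs).symm

lemma aux_summable_log {g : ℕ → ℂ} (h : Summable fun n => ‖g n - 1‖) (h0 : ∀ n, g n ≠ 0) :
    Summable fun n => Complex.log (g n) := by
  have hev : ∀ᶠ n in atTop, ‖Complex.log (g n)‖ ≤ (3/2) * ‖g n - 1‖ := by
    have : Tendsto (fun n => ‖g n - 1‖) atTop (nhds 0) := h.tendsto_atTop_zero
    filter_upwards [this.eventually_le_const (by norm_num : (0:ℝ) < 1/2)] with n hn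
    have : Complex.log (g n) = Complex.log (1 + (g n - 1)) := by ring_nf
    rw [this]
    exact Complex.norm_log_one_add_half_le_self hn
  apply Summable.of_norm_bounded_eventually_nat (h.mul_left (3/2)) hev

lemma aux_multipliable {g : ℕ → ℂ} (h : Summable fun n => ‖g n - 1‖) : Multipliable g := by
  by_cases h0 : ∃ n, g n = 0
  · exact ⟨0, aux_hasProd_zero h0⟩
  · push_neg at h0
    exact Complex.multipliable_of_summable_log (aux_summable_log h h0)

lemma aux_tprod_ne_zero {g : ℕ → ℂ} (h : Summable fun n => ‖g n - 1‖) (h0 : ∀ n, g n ≠ 0) :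
    (∏' n, g n) ≠ 0 := by
  have h2 := Complex.cexp_tsum_eq_tprod h0 (aux_summable_log h h0)
  rw [← h2]
  exact Complex.exp_ne_zero _



lemma aux_prod_sub_one_norm (s : Finset ℕ) (b : ℕ → ℂ) :
    ‖(∏ i ∈ s, (1 + b i)) - 1‖ ≤ (∏ i ∈ s, (1 + ‖b i‖)) - 1 := by
  classical
  induction s using Finset.induction with
  | empty => simp
  | insert j t hj ih =>
    rw [Finset.prod_insert hj, Finset.prod_insert hj]
    have h1 : (1 + b j) * (∏ i ∈ t, (1 + b i)) - 1 =
        ((∏ i ∈ t, (1 + b i)) - 1) + b j * (∏ i ∈ t, (1 + b i)) := by ring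
    rw [h1]
    have hP : ‖∏ i ∈ t, (1 + b i)‖ ≤ ∏ i ∈ t, (1 + ‖b i‖) := by
      rw [norm_prod]
      refine Finset.prod_le_prod (fun i _ => norm_nonneg _) ?_
      intro i _
      calc ‖1 + b i‖ ≤ ‖(1:ℂ)‖ + ‖b i‖ := norm_add_le _ _
        _ = 1 + ‖b i‖ := by norm_num
    calc ‖((∏ i ∈ t, (1 + b i)) - 1) + b j * (∏ i ∈ t, (1 + b i))‖
        ≤ ‖(∏ i ∈ t, (1 + b i)) - 1‖ + ‖b j‖ * ‖∏ i ∈ t, (1 + b i)‖ := by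
          refine le_trans (norm_add_le _ _) ?_; rw [norm_mul]
      _ ≤ ((∏ i ∈ t, (1 + ‖b i‖)) - 1) + ‖b j‖ * (∏ i ∈ t, (1 + ‖b i‖)) := by
          refine add_le_add ih (mul_le_mul_of_nonneg_left hP (norm_nonneg _))
      _ = (1 + ‖b j‖) * (∏ i ∈ t, (1 + ‖b i‖)) - 1 := by ring

lemma aux_prod_le_exp (s : Finset ℕ) (u : ℕ → ℝ) (hu : ∀ i, 0 ≤ u i) :
    (∏ i ∈ s, (1 + u i)) ≤ Real.exp (∑ i ∈ s, u i) := by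
  rw [Real.exp_sum]
  refine Finset.prod_le_prod (fun i _ => by have := hu i; positivity)
    (fun i _ => by have := Real.add_one_le_exp (u i); linarith)

lemma aux_tprod_diff {f : ℕ → ℂ → ℂ} {u : ℕ → ℝ} {s : Set ℂ} (hs : IsOpen s)
    (hdiff : ∀ n, Differentiable ℂ (f n)) (hu : Summable u) (hu0 : ∀ n, 0 ≤ u n)
    (hb : ∀ n, ∀ z ∈ s, ‖f n z - 1‖ ≤ u n) :
    DifferentiableOn ℂ (fun z => ∏' n, f n z) s := by
  set F : ℕ → ℂ → ℂ := fun n z => ∏ i ∈ Finset.range n, f i z with hF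
  have hmult : ∀ z ∈ s, Multipliable (fun n => f n z) := fun z hz =>
    aux_multipliable (Summable.of_nonneg_of_le (fun n => norm_nonneg _)
      (fun n => hb n z hz) hu)
  -- the key bound
  have key : ∀ m n : ℕ, m ≤ n → ∀ z ∈ s, dist (F m z) (F n z) ≤
      Real.exp (∑' i, u i) * (Real.exp (∑' k, u (k + m)) - 1) := by
    intro m n hmn z hz
    have hsum_shift : Summable (fun k => u (k + m)) := (summable_nat_add_iff m).2 hu
    rw [dist_eq_norm]
    have hsplit : F n z = F m z * ∏ i ∈ Finset.Ico m n, f i z := by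
      rw [hF]; exact (Finset.prod_range_mul_prod_Ico _ hmn).symm
    have h1 : F m z - F n z = -(F m z * ((∏ i ∈ Finset.Ico m n, f i z) - 1)) := by
      rw [hsplit]; ring
    rw [h1, norm_neg, norm_mul]
    have hFm : ‖F m z‖ ≤ Real.exp (∑' i, u i) := by
      rw [hF, norm_prod]
      calc ∏ i ∈ Finset.range m, ‖f i z‖ ≤ ∏ i ∈ Finset.range m, (1 + u i) := by
            refine Finset.prod_le_prod (fun i _ => norm_nonneg _) (fun i _ => ?_)
            have : f i z = 1 + (f i z - 1) := by ring
            rw [this]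
            exact le_trans (norm_add_le _ _) (by simpa using hb i z hz)
        _ ≤ Real.exp (∑ i ∈ Finset.range m, u i) := aux_prod_le_exp _ _ hu0
        _ ≤ Real.exp (∑' i, u i) := Real.exp_le_exp.2 (hu.sum_le_tsum _ (fun i _ => hu0 i))
    have hIco : ‖(∏ i ∈ Finset.Ico m n, f i z) - 1‖ ≤ Real.exp (∑' k, u (k + m)) - 1 := by
      have := aux_prod_sub_one_norm (Finset.Ico m n) (fun i => f i z - 1)
      simp only [add_sub_cancel] at this
      refine le_trans this ?_
      refine sub_le_sub_right ?_ 1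
      calc (∏ i ∈ Finset.Ico m n, (1 + ‖f i z - 1‖))
          ≤ ∏ i ∈ Finset.Ico m n, (1 + u i) := by
            refine Finset.prod_le_prod (fun i _ => by positivity) (fun i _ => ?_)
            exact add_le_add_right (hb i z hz) 1
        _ ≤ Real.exp (∑ i ∈ Finset.Ico m n, u i) := aux_prod_le_exp _ _ hu0
        _ ≤ Real.exp (∑' k, u (k + m)) := by
            apply Real.exp_le_exp.2
            rw [Finset.sum_Ico_eq_sum_range]
            have : ∀ i, u (m + i) = (fun k => u (k + m)) i := fun i => by simp [add_comm]
            calc ∑ i ∈ Finset.range (n - m), u (m + i)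
                = ∑ i ∈ Finset.range (n - m), u (i + m) := by
                  exact Finset.sum_congr rfl (fun i _ => by rw [add_comm])
              _ ≤ ∑' k, u (k + m) := hsum_shift.sum_le_tsum _ (fun i _ => hu0 _)
    exact mul_le_mul hFm hIco (norm_nonneg _) (Real.exp_nonneg _)
  have hcauchy : UniformCauchySeqOn F atTop s := by
    rw [Metric.uniformCauchySeqOn_iff]
    intro ε hε
    have htail : Tendsto (fun m => Real.exp (∑' i, u i) * (Real.exp (∑' k, u (k + m)) - 1))
        atTop (nhds 0) := by
      have h0 : Tendsto (fun m => ∑' k, u (k + m)) atTop (nhds 0) := tendsto_sum_nat_add u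
      have := ((Real.continuous_exp.tendsto 0).comp h0).sub_const 1
      simpa using (this.const_mul (Real.exp (∑' i, u i)))
    obtain ⟨N, hN⟩ := (htail.eventually_lt_const hε).exists_forall_of_atTop
    refine ⟨N, fun m hm n hn z hz => ?_⟩
    rcases le_total m n with h | h
    · exact lt_of_le_of_lt (key m n h z hz) (hN m hm)
    · rw [dist_comm]
      exact lt_of_le_of_lt (key n m h z hz) (hN n hn)
  have hptwise : ∀ z ∈ s, Tendsto (fun n => F n z) atTop (nhds (∏' i, f i z)) :=
    fun z hz => (hmult z hz).hasProd.tendsto_prod_nat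
  have hunif : TendstoUniformlyOn F (fun z => ∏' i, f i z) atTop s :=
    hcauchy.tendstoUniformlyOn_of_tendsto hptwise
  refine hunif.tendstoLocallyUniformlyOn.differentiableOn
    (Filter.Eventually.of_forall fun n => ?_) hs
  exact (Differentiable.fun_finsetProd (fun i _ => hdiff i)).differentiableOn



lemma two_pi_I_ne : (2 * (π:ℂ) * I) ≠ 0 := by
  simp [Real.pi_ne_zero, Complex.I_ne_zero, Complex.ofReal_ne_zero]

lemma exp_eq_one_iff' (w : ℂ) : Complex.exp (2*(π:ℂ)*I*w) = 1 ↔ ∃ m : ℤ, w = (m:ℂ) := by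
  rw [Complex.exp_eq_one_iff]
  constructor
  · rintro ⟨k, hk⟩
    exact ⟨k, mul_left_cancel₀ two_pi_I_ne (by linear_combination hk)⟩
  · rintro ⟨m, rfl⟩
    exact ⟨m, by ring⟩

lemma pre_eq_zero_iff (z : ℂ) :
    Complex.exp (-((π:ℂ) * I * z)) - Complex.exp ((π:ℂ) * I * z) = 0 ↔ ∃ m : ℤ, z = (m:ℂ) := by
  rw [sub_eq_zero, Complex.exp_eq_exp_iff_exp_sub_eq_one,
    show -((π:ℂ) * I * z) - (π:ℂ) * I * z = 2*(π:ℂ)*I*(-z) by ring, exp_eq_one_iff']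
  constructor
  · rintro ⟨m, hm⟩; exact ⟨-m, by push_cast; linear_combination -hm⟩
  · rintro ⟨m, rfl⟩; exact ⟨-m, by push_cast; ring⟩

lemma den_factor_plus (τ z : ℂ) (n : ℕ) :
    1 - qex τ ^ (n + 1) * Complex.exp (2 * (π:ℂ) * I * z) = 0 ↔
      ∃ m : ℤ, z = (m:ℂ) - ((n:ℂ) + 1) * τ := by
  have hq : qex τ ^ (n+1) * Complex.exp (2*(π:ℂ)*I*z)
      = Complex.exp (2*(π:ℂ)*I*(((n:ℂ)+1)*τ + z)) := by
    rw [qex, ← Complex.exp_nat_mul, ← Complex.exp_add]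
    congr 1; push_cast; ring
  rw [sub_eq_zero, eq_comm, hq, exp_eq_one_iff']
  constructor
  · rintro ⟨m, hm⟩; exact ⟨m, by linear_combination hm⟩
  · rintro ⟨m, rfl⟩; exact ⟨m, by ring⟩

lemma den_factor_minus (τ z : ℂ) (n : ℕ) :
    1 - qex τ ^ (n + 1) * Complex.exp (-(2 * (π:ℂ) * I * z)) = 0 ↔
      ∃ m : ℤ, z = (m:ℂ) + ((n:ℂ) + 1) * τ := by
  have hq : qex τ ^ (n+1) * Complex.exp (-(2*(π:ℂ)*I*z))
      = Complex.exp (2*(π:ℂ)*I*(((n:ℂ)+1)*τ - z)) := by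
    rw [qex, ← Complex.exp_nat_mul, ← Complex.exp_add]
    congr 1; push_cast; ring
  rw [sub_eq_zero, eq_comm, hq, exp_eq_one_iff']
  constructor
  · rintro ⟨m, hm⟩; exact ⟨-m, by push_cast; linear_combination -hm⟩
  · rintro ⟨m, rfl⟩; exact ⟨-m, by push_cast; ring⟩

lemma den_eq_zero_iff (τ z : ℂ) (n : ℕ) :
    phiDenF τ z n = 0 ↔
      (∃ m : ℤ, z = (m:ℂ) - ((n:ℂ)+1) * τ) ∨ (∃ m : ℤ, z = (m:ℂ) + ((n:ℂ)+1) * τ) := by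
  rw [phiDenF, mul_eq_zero, den_factor_plus, den_factor_minus]

-- re computation
lemma re_pi_I_mul (w : ℂ) : ((π:ℂ) * I * w).re = -(π * w.im) := by
  simp [Complex.mul_re, Complex.mul_im]

lemma one_add_exp_ne_zero {c : ℂ} (h : c.re ≠ 0) : 1 + Complex.exp c ≠ 0 := by
  intro hc
  have h1 : Complex.exp c = -1 := by linear_combination hc
  have h2 : ‖Complex.exp c‖ = 1 := by rw [h1]; simp
  rw [Complex.norm_exp] at h2
  exact h (by simpa using h2)

lemma num_factor_rewrite_plus (τ : ℂ) (m k : ℤ) (n : ℕ) :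
    qhex τ ^ (2*n+1) * Complex.exp (2*(π:ℂ)*I*((m:ℂ) + (k:ℂ)*τ))
      = Complex.exp ((π:ℂ)*I*(((2*(n:ℤ)+1+2*k : ℤ):ℂ) * τ)) := by
  rw [qhex, ← Complex.exp_nat_mul, ← Complex.exp_add,
    show ((2*n+1 : ℕ):ℂ) * ((π:ℂ)*I*τ) + 2*(π:ℂ)*I*((m:ℂ) + (k:ℂ)*τ)
      = (m:ℂ)*(2*(π:ℂ)*I) + (π:ℂ)*I*(((2*(n:ℤ)+1+2*k : ℤ):ℂ) * τ) by push_cast; ring,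
    Complex.exp_add, Complex.exp_int_mul_two_pi_mul_I, one_mul]

lemma num_factor_rewrite_minus (τ : ℂ) (m k : ℤ) (n : ℕ) :
    qhex τ ^ (2*n+1) * Complex.exp (-(2*(π:ℂ)*I*((m:ℂ) + (k:ℂ)*τ)))
      = Complex.exp ((π:ℂ)*I*(((2*(n:ℤ)+1-2*k : ℤ):ℂ) * τ)) := by
  rw [qhex, ← Complex.exp_nat_mul, ← Complex.exp_add,
    show ((2*n+1 : ℕ):ℂ) * ((π:ℂ)*I*τ) + -(2*(π:ℂ)*I*((m:ℂ) + (k:ℂ)*τ))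
      = (-m:ℤ)*(2*(π:ℂ)*I) + (π:ℂ)*I*(((2*(n:ℤ)+1-2*k : ℤ):ℂ) * τ) by push_cast; ring,
    Complex.exp_add, Complex.exp_int_mul_two_pi_mul_I, one_mul]

lemma num_factor_ne_zero {τ : ℂ} (hτ : 0 < τ.im) (a : ℤ) (ha : a ≠ 0) :
    1 + Complex.exp ((π:ℂ)*I*((a:ℂ) * τ)) ≠ 0 := by
  apply one_add_exp_ne_zero
  rw [re_pi_I_mul]
  have him : ((a:ℂ) * τ).im = (a:ℝ) * τ.im := by simp [Complex.mul_im]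
  rw [him, neg_ne_zero]
  have h1 : ((a:ℝ)) ≠ 0 := Int.cast_ne_zero.2 ha
  have h2 : τ.im ≠ 0 := ne_of_gt hτ
  simp [mul_eq_zero, Real.pi_ne_zero, h1, h2]

lemma phiNumF_ne_zero {τ : ℂ} (hτ : 0 < τ.im) (m k : ℤ) (n : ℕ) :
    phiNumF τ ((m:ℂ) + (k:ℂ)*τ) n ≠ 0 := by
  rw [phiNumF]
  apply mul_ne_zero
  · rw [num_factor_rewrite_plus]
    exact num_factor_ne_zero hτ _ (by omega)
  · rw [num_factor_rewrite_minus]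
    exact num_factor_ne_zero hτ _ (by omega)

lemma zero_set_eq (τ : ℂ) :
    {z : ℂ | Complex.exp (-((π : ℂ) * I * z)) - Complex.exp ((π : ℂ) * I * z) = 0 ∨
        ∃ n : ℕ, phiDenF τ z n = 0} = lattice τ := by
  ext z
  simp only [Set.mem_setOf_eq, _root_.lattice, Set.mem_setOf_eq]
  constructor
  · rintro (hp | ⟨n, hd⟩)
    · obtain ⟨m, rfl⟩ := (pre_eq_zero_iff z).mp hp
      exact ⟨m, 0, by push_cast; ring⟩
    · rcases (den_eq_zero_iff τ z n).mp hd with ⟨m, rfl⟩ | ⟨m, rfl⟩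
      · exact ⟨m, -((n:ℤ)+1), by push_cast; ring⟩
      · exact ⟨m, (n:ℤ)+1, by push_cast; ring⟩
  · rintro ⟨m, k, rfl⟩
    rcases lt_trichotomy k 0 with hk | rfl | hk
    · refine Or.inr ⟨(-k-1).toNat, (den_eq_zero_iff τ _ _).mpr (Or.inl ⟨m, ?_⟩)⟩
      have h1 : ((((-k-1).toNat : ℕ)):ℂ) = ((-k-1 : ℤ):ℂ) := by
        exact_mod_cast congrArg (fun i : ℤ => (i:ℂ)) (by omega : (((-k-1).toNat : ℤ)) = -k-1)
      rw [h1]; push_cast; ring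
    · exact Or.inl ((pre_eq_zero_iff _).mpr ⟨m, by push_cast; ring⟩)
    · refine Or.inr ⟨(k-1).toNat, (den_eq_zero_iff τ _ _).mpr (Or.inr ⟨m, ?_⟩)⟩
      have h1 : ((((k-1).toNat : ℕ)):ℂ) = ((k-1 : ℤ):ℂ) := by
        exact_mod_cast congrArg (fun i : ℤ => (i:ℂ)) (by omega : (((k-1).toNat : ℤ)) = k-1)
      rw [h1]; push_cast; ring

lemma norm_qhex (τ : ℂ) : ‖qhex τ‖ = Real.exp (-(π * τ.im)) := by
  rw [qhex, Complex.norm_exp, re_pi_I_mul]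

lemma norm_qex (τ : ℂ) : ‖qex τ‖ = Real.exp (-(π * τ.im)) ^ 2 := by
  have : qex τ = qhex τ ^ 2 := by
    rw [qex, qhex, ← Complex.exp_nat_mul]
    congr 1; push_cast; ring
  rw [this, norm_pow, norm_qhex]

lemma norm_exp_two_pi_I (z : ℂ) : ‖Complex.exp (2*(π:ℂ)*I*z)‖ = Real.exp (-(π * (2*z).im)) := by
  rw [show 2*(π:ℂ)*I*z = (π:ℂ)*I*(2*z) by ring, Complex.norm_exp,
    re_pi_I_mul]

lemma norm_exp_neg_two_pi_I (z : ℂ) :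
    ‖Complex.exp (-(2*(π:ℂ)*I*z))‖ = Real.exp (π * (2*z).im) := by
  rw [show -(2*(π:ℂ)*I*z) = (π:ℂ)*I*(-(2*z)) by ring, Complex.norm_exp,
    re_pi_I_mul]
  simp

lemma im_bound_of_ball {z₀ z : ℂ} (hz : z ∈ Metric.ball z₀ 1) : |z.im| ≤ |z₀.im| + 1 := by
  have h1 : |z.im - z₀.im| ≤ dist z z₀ := by
    rw [Complex.dist_eq]
    have := Complex.abs_im_le_norm (z - z₀); rwa [Complex.sub_im] at this
  have h2 : dist z z₀ < 1 := Metric.mem_ball.mp hz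
  calc |z.im| = |z₀.im + (z.im - z₀.im)| := by ring_nf
    _ ≤ |z₀.im| + |z.im - z₀.im| := abs_add_le _ _
    _ ≤ |z₀.im| + 1 := by linarith

lemma exp_factor_bound_plus {z₀ z : ℂ} (hz : z ∈ Metric.ball z₀ 1) :
    ‖Complex.exp (2*(π:ℂ)*I*z)‖ ≤ Real.exp (2*π*(|z₀.im|+1)) := by
  rw [norm_exp_two_pi_I, Real.exp_le_exp]
  have h := im_bound_of_ball hz
  have h2 : (2*z).im = 2 * z.im := by simp [Complex.mul_im]
  rw [h2]
  nlinarith [Real.pi_pos, neg_abs_le z.im]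

lemma exp_factor_bound_minus {z₀ z : ℂ} (hz : z ∈ Metric.ball z₀ 1) :
    ‖Complex.exp (-(2*(π:ℂ)*I*z))‖ ≤ Real.exp (2*π*(|z₀.im|+1)) := by
  rw [norm_exp_neg_two_pi_I, Real.exp_le_exp]
  have h := im_bound_of_ball hz
  have h2 : (2*z).im = 2 * z.im := by simp [Complex.mul_im]
  rw [h2]
  nlinarith [Real.pi_pos, le_abs_self z.im]

lemma abstract_factor_bound {q e₁ e₂ : ℂ} {r B : ℝ} (hq : ‖q‖ ≤ r) (hr0 : 0 ≤ r) (hr1 : r ≤ 1)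
    (he₁ : ‖e₁‖ ≤ B) (he₂ : ‖e₂‖ ≤ B) (hB : 0 ≤ B) (s₁ s₂ : ℂ) (hs₁ : ‖s₁‖ = 1)
    (hs₂ : ‖s₂‖ = 1) (n : ℕ) :
    ‖(1 + s₁ * q * e₁) * (1 + s₂ * q * e₂) - 1‖ ≤ (2*B + B^2) * r := by
  have hqe₁ : ‖s₁ * q * e₁‖ ≤ B * r := by
    rw [norm_mul, norm_mul, hs₁, one_mul]
    calc ‖q‖ * ‖e₁‖ ≤ r * B := by
          exact mul_le_mul hq he₁ (norm_nonneg _) hr0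
      _ = B * r := by ring
  have hqe₂ : ‖s₂ * q * e₂‖ ≤ B * r := by
    rw [norm_mul, norm_mul, hs₂, one_mul]
    calc ‖q‖ * ‖e₂‖ ≤ r * B := by
          exact mul_le_mul hq he₂ (norm_nonneg _) hr0
      _ = B * r := by ring
  have key : (1 + s₁ * q * e₁) * (1 + s₂ * q * e₂) - 1
      = s₁ * q * e₁ + s₂ * q * e₂ + (s₁ * q * e₁) * (s₂ * q * e₂) := by ring
  rw [key]
  have hrB : 0 ≤ B * r := mul_nonneg hB hr0
  calc ‖s₁ * q * e₁ + s₂ * q * e₂ + (s₁ * q * e₁) * (s₂ * q * e₂)‖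
      ≤ ‖s₁ * q * e₁‖ + ‖s₂ * q * e₂‖ + ‖s₁ * q * e₁‖ * ‖s₂ * q * e₂‖ := by
        refine le_trans (norm_add_le _ _) ?_
        rw [norm_mul]
        exact add_le_add_left (norm_add_le _ _) _
    _ ≤ B * r + B * r + (B * r) * (B * r) := by
        refine add_le_add (add_le_add hqe₁ hqe₂) ?_
        exact mul_le_mul hqe₁ hqe₂ (norm_nonneg _) hrB
    _ ≤ (2*B + B^2) * r := by
        nlinarith [mul_nonneg (mul_nonneg (mul_nonneg hB hB) hr0) (sub_nonneg.2 hr1)]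

section Specific
variable {τ : ℂ}

lemma r0_pos (τ : ℂ) : 0 < Real.exp (-(π * τ.im)) := Real.exp_pos _

lemma r0_lt_one (hτ : 0 < τ.im) : Real.exp (-(π * τ.im)) < 1 := by
  rw [Real.exp_lt_one_iff]
  nlinarith [Real.pi_pos]

lemma B_nonneg (z₀ : ℂ) : 0 ≤ Real.exp (2*π*(|z₀.im|+1)) := (Real.exp_pos _).le

lemma num_bound (hτ : 0 < τ.im) (z₀ : ℂ) (n : ℕ) :
    ∀ z ∈ Metric.ball z₀ 1, ‖phiNumF τ z n - 1‖ ≤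
      (2*Real.exp (2*π*(|z₀.im|+1)) + Real.exp (2*π*(|z₀.im|+1))^2) * Real.exp (-(π*τ.im))^n := by
  intro z hz
  have hq : ‖qhex τ ^ (2*n+1)‖ ≤ Real.exp (-(π*τ.im))^n := by
    rw [norm_pow, norm_qhex]
    exact pow_le_pow_of_le_one (r0_pos τ).le (r0_lt_one hτ).le (by omega)
  have := abstract_factor_bound (q := qhex τ ^ (2*n+1))
    (e₁ := Complex.exp (2*(π:ℂ)*I*z)) (e₂ := Complex.exp (-(2*(π:ℂ)*I*z)))
    hq (by positivity) (pow_le_one₀ (r0_pos τ).le (r0_lt_one hτ).le)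
    (exp_factor_bound_plus hz) (exp_factor_bound_minus hz) (B_nonneg z₀) 1 1
    (by simp) (by simp)
  simpa [phiNumF] using this

lemma den_bound (hτ : 0 < τ.im) (z₀ : ℂ) (n : ℕ) :
    ∀ z ∈ Metric.ball z₀ 1, ‖phiDenF τ z n - 1‖ ≤
      (2*Real.exp (2*π*(|z₀.im|+1)) + Real.exp (2*π*(|z₀.im|+1))^2) * Real.exp (-(π*τ.im))^n := by
  intro z hz
  have hq : ‖qex τ ^ (n+1)‖ ≤ Real.exp (-(π*τ.im))^n := by
    rw [norm_pow, norm_qex, ← pow_mul]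
    exact pow_le_pow_of_le_one (r0_pos τ).le (r0_lt_one hτ).le (by omega)
  have := abstract_factor_bound (q := qex τ ^ (n+1))
    (e₁ := Complex.exp (2*(π:ℂ)*I*z)) (e₂ := Complex.exp (-(2*(π:ℂ)*I*z)))
    hq (by positivity) (pow_le_one₀ (r0_pos τ).le (r0_lt_one hτ).le)
    (exp_factor_bound_plus hz) (exp_factor_bound_minus hz) (B_nonneg z₀) (-1) (-1)
    (by simp) (by simp)
  simpa [phiDenF, sub_eq_add_neg, neg_mul] using this

lemma summable_u (hτ : 0 < τ.im) (z₀ : ℂ) :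
    Summable (fun n : ℕ =>
      (2*Real.exp (2*π*(|z₀.im|+1)) + Real.exp (2*π*(|z₀.im|+1))^2) * Real.exp (-(π*τ.im))^n) :=
  (summable_geometric_of_lt_one (r0_pos τ).le (r0_lt_one hτ)).mul_left _

lemma u_nonneg (τ z₀ : ℂ) (n : ℕ) : 0 ≤
    (2*Real.exp (2*π*(|z₀.im|+1)) + Real.exp (2*π*(|z₀.im|+1))^2) * Real.exp (-(π*τ.im))^n := by
  positivity

lemma num_factor_diff (τ : ℂ) (n : ℕ) : Differentiable ℂ (fun z => phiNumF τ z n) := by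
  unfold phiNumF
  have h1 : Differentiable ℂ (fun z : ℂ => Complex.exp (2*(π:ℂ)*I*z)) :=
    Complex.differentiable_exp.comp (differentiable_fun_id.const_mul _)
  have h2 : Differentiable ℂ (fun z : ℂ => Complex.exp (-(2*(π:ℂ)*I*z))) :=
    Complex.differentiable_exp.comp ((differentiable_fun_id.const_mul _).neg)
  exact ((differentiable_const _).add (h1.const_mul _)).mul
    ((differentiable_const _).add (h2.const_mul _))

lemma den_factor_diff (τ : ℂ) (n : ℕ) : Differentiable ℂ (fun z => phiDenF τ z n) := by
  unfold phiDenF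
  have h1 : Differentiable ℂ (fun z : ℂ => Complex.exp (2*(π:ℂ)*I*z)) :=
    Complex.differentiable_exp.comp (differentiable_fun_id.const_mul _)
  have h2 : Differentiable ℂ (fun z : ℂ => Complex.exp (-(2*(π:ℂ)*I*z))) :=
    Complex.differentiable_exp.comp ((differentiable_fun_id.const_mul _).neg)
  exact ((differentiable_const _).sub (h1.const_mul _)).mul
    ((differentiable_const _).sub (h2.const_mul _))

lemma N_diffAt (hτ : 0 < τ.im) (z₀ : ℂ) :
    DifferentiableAt ℂ (fun z => ∏' n, phiNumF τ z n) z₀ := by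
  have := aux_tprod_diff (f := fun n z => phiNumF τ z n) Metric.isOpen_ball
    (num_factor_diff τ) (summable_u hτ z₀) (u_nonneg τ z₀) (fun n z hz => num_bound hτ z₀ n z hz)
  exact this.differentiableAt (Metric.ball_mem_nhds z₀ one_pos)

lemma D_diffAt (hτ : 0 < τ.im) (z₀ : ℂ) :
    DifferentiableAt ℂ (fun z => ∏' n, phiDenF τ z n) z₀ := by
  have := aux_tprod_diff (f := fun n z => phiDenF τ z n) Metric.isOpen_ball
    (den_factor_diff τ) (summable_u hτ z₀) (u_nonneg τ z₀) (fun n z hz => den_bound hτ z₀ n z hz)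
  exact this.differentiableAt (Metric.ball_mem_nhds z₀ one_pos)

lemma num_summable_norm (hτ : 0 < τ.im) (z : ℂ) :
    Summable (fun n => ‖phiNumF τ z n - 1‖) :=
  Summable.of_nonneg_of_le (fun n => norm_nonneg _)
    (fun n => num_bound hτ z n z (Metric.mem_ball_self one_pos)) (summable_u hτ z)

lemma den_summable_norm (hτ : 0 < τ.im) (z : ℂ) :
    Summable (fun n => ‖phiDenF τ z n - 1‖) :=
  Summable.of_nonneg_of_le (fun n => norm_nonneg _)
    (fun n => den_bound hτ z n z (Metric.mem_ball_self one_pos)) (summable_u hτ z)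

end Specific

lemma lattice_isolated {τ : ℂ} (hτ : 0 < τ.im) {z₀ : ℂ} (hz₀ : z₀ ∈ lattice τ) :
    ∃ ε > 0, ∀ w ∈ Metric.ball z₀ ε, w ∈ lattice τ → w = z₀ := by
  refine ⟨min 1 τ.im, lt_min one_pos hτ, ?_⟩
  obtain ⟨m₀, k₀, rfl⟩ := hz₀
  rintro w hw ⟨m, k, rfl⟩
  set z₀ : ℂ := (m₀:ℂ) + (k₀:ℂ)*τ with hz₀def
  have hdist : dist ((m:ℂ) + (k:ℂ)*τ) z₀ < min 1 τ.im := Metric.mem_ball.mp hw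
  have hsub : (m:ℂ) + (k:ℂ)*τ - z₀ = ((m - m₀ : ℤ):ℂ) + ((k - k₀ : ℤ):ℂ)*τ := by
    push_cast; ring
  have habs : ‖(m:ℂ) + (k:ℂ)*τ - z₀‖ < min 1 τ.im := by
    rw [← Complex.dist_eq] at *; exact hdist
  have hkk : k = k₀ := by
    by_contra hne
    have him : (((m:ℂ) + (k:ℂ)*τ - z₀)).im = ((k - k₀ : ℤ):ℝ) * τ.im := by
      rw [hsub]; simp [Complex.add_im, Complex.mul_im]
    have h1 : |((k - k₀ : ℤ):ℝ) * τ.im| ≤ ‖(m:ℂ) + (k:ℂ)*τ - z₀‖ := by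
      rw [← him]; exact Complex.abs_im_le_norm _
    have h2 : (1:ℝ) ≤ |((k - k₀ : ℤ):ℝ)| := by
      have : (1:ℤ) ≤ |k - k₀| := Int.one_le_abs (by omega)
      calc (1:ℝ) ≤ (|k - k₀| : ℤ) := by exact_mod_cast this
        _ = |((k - k₀ : ℤ):ℝ)| := Int.cast_abs
    have h3 : τ.im ≤ |((k - k₀ : ℤ):ℝ) * τ.im| := by
      rw [abs_mul, abs_of_pos hτ]
      nlinarith
    have := lt_of_le_of_lt (h3.trans h1) habs
    exact absurd this (not_lt.2 (min_le_right _ _))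
  subst hkk
  have hmm : m = m₀ := by
    by_contra hne
    have hre : (((m:ℂ) + (k:ℂ)*τ - z₀)).re = ((m - m₀ : ℤ):ℝ) := by
      rw [hsub]; simp
    have h1 : |((m - m₀ : ℤ):ℝ)| ≤ ‖(m:ℂ) + (k:ℂ)*τ - z₀‖ := by
      rw [← hre]; exact Complex.abs_re_le_norm _
    have h2 : (1:ℝ) ≤ |((m - m₀ : ℤ):ℝ)| := by
      have : (1:ℤ) ≤ |m - m₀| := Int.one_le_abs (by omega)
      calc (1:ℝ) ≤ (|m - m₀| : ℤ) := by exact_mod_cast this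
        _ = |((m - m₀ : ℤ):ℝ)| := Int.cast_abs
    have := lt_of_le_of_lt (h2.trans h1) habs
    exact absurd this (not_lt.2 (min_le_left _ _))
  subst hmm
  rfl

lemma pre_diff : Differentiable ℂ
    (fun z : ℂ => Complex.exp (-((π:ℂ)*I*z)) - Complex.exp ((π:ℂ)*I*z)) := by
  have h1 : Differentiable ℂ (fun z : ℂ => Complex.exp (-((π:ℂ)*I*z))) :=
    Complex.differentiable_exp.comp ((differentiable_fun_id.const_mul _).neg)
  have h2 : Differentiable ℂ (fun z : ℂ => Complex.exp ((π:ℂ)*I*z)) :=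
    Complex.differentiable_exp.comp (differentiable_fun_id.const_mul _)
  exact h1.sub h2

lemma pre_ne_zero {τ : ℂ} {z : ℂ} (hz : z ∉ lattice τ) :
    Complex.exp (-((π:ℂ)*I*z)) - Complex.exp ((π:ℂ)*I*z) ≠ 0 := by
  intro h0
  obtain ⟨m, rfl⟩ := (pre_eq_zero_iff z).mp h0
  exact hz ⟨m, 0, by push_cast; ring⟩

lemma D_ne_zero {τ : ℂ} (hτ : 0 < τ.im) {z : ℂ} (hz : z ∉ lattice τ) :
    (∏' n : ℕ, phiDenF τ z n) ≠ 0 := by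
  refine aux_tprod_ne_zero (den_summable_norm hτ z) (fun n h0 => ?_)
  rcases (den_eq_zero_iff τ z n).mp h0 with ⟨m, rfl⟩ | ⟨m, rfl⟩
  · exact hz ⟨m, -((n:ℤ)+1), by push_cast; ring⟩
  · exact hz ⟨m, (n:ℤ)+1, by push_cast; ring⟩

theorem Phi1_holomorphic_off_lattice_and_poles_eq_lattice (τ : ℂ) (hτ : 0 < τ.im) :
    (∀ z ∉ lattice τ, DifferentiableAt ℂ (Phi1 τ) z) ∧
    (∀ z ∈ lattice τ,
      Filter.Tendsto (fun w => ‖Phi1 τ w‖) (nhdsWithin z {z}ᶜ) Filter.atTop) ∧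
    ({z : ℂ | Complex.exp (-((π : ℂ) * I * z)) - Complex.exp ((π : ℂ) * I * z) = 0 ∨
        ∃ n : ℕ, phiDenF τ z n = 0} = lattice τ) ∧
    (∀ z ∈ lattice τ, ∀ n : ℕ, phiNumF τ z n ≠ 0) := by
  have hPhi : Phi1 τ = fun z =>
      (Complex.exp (-((π:ℂ)*I*z)) - Complex.exp ((π:ℂ)*I*z))⁻¹ *
        ((∏' n : ℕ, phiNumF τ z n) / (∏' n : ℕ, phiDenF τ z n)) := rfl
  refine ⟨?_, ?_, zero_set_eq τ, ?_⟩
  · -- differentiability off the lattice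
    intro z hz
    rw [hPhi]
    exact ((pre_diff.differentiableAt).inv (pre_ne_zero hz)).mul
      (((N_diffAt hτ z)).div (D_diffAt hτ z) (D_ne_zero hτ hz))
  · -- poles
    intro z₀ hz₀
    have hz₀' : Complex.exp (-((π:ℂ)*I*z₀)) - Complex.exp ((π:ℂ)*I*z₀) = 0 ∨
        ∃ n : ℕ, phiDenF τ z₀ n = 0 := by
      rw [← zero_set_eq τ] at hz₀; exact hz₀
    -- h := pre * D vanishes at z₀
    have hh0 : (Complex.exp (-((π:ℂ)*I*z₀)) - Complex.exp ((π:ℂ)*I*z₀)) *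
        (∏' n : ℕ, phiDenF τ z₀ n) = 0 := by
      rcases hz₀' with h | ⟨n, hn⟩
      · rw [h, zero_mul]
      · rw [(aux_hasProd_zero ⟨n, hn⟩).tprod_eq, mul_zero]
    obtain ⟨m, k, hz₀eq⟩ := hz₀
    have hN0 : (∏' n : ℕ, phiNumF τ z₀ n) ≠ 0 := by
      refine aux_tprod_ne_zero (num_summable_norm hτ z₀) (fun n => ?_)
      rw [hz₀eq]; exact phiNumF_ne_zero hτ m k n
    have hNcont : ContinuousAt (fun z => ∏' n : ℕ, phiNumF τ z n) z₀ :=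
      (N_diffAt hτ z₀).continuousAt
    have hDcont : ContinuousAt (fun z => ∏' n : ℕ, phiDenF τ z n) z₀ :=
      (D_diffAt hτ z₀).continuousAt
    have hprecont : ContinuousAt
        (fun z : ℂ => Complex.exp (-((π:ℂ)*I*z)) - Complex.exp ((π:ℂ)*I*z)) z₀ :=
      pre_diff.continuous.continuousAt
    obtain ⟨ε, hε, hiso⟩ := lattice_isolated hτ ⟨m, k, hz₀eq⟩
    have hev : ∀ᶠ w in nhdsWithin z₀ {z₀}ᶜ, w ∉ lattice τ := by
      filter_upwards [nhdsWithin_le_nhds (Metric.ball_mem_nhds z₀ hε),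
        self_mem_nhdsWithin] with w hwball hwne hlat
      exact hwne (hiso w hwball hlat)
    have heq : (fun w => ‖Phi1 τ w‖) = fun w =>
        ‖∏' n : ℕ, phiNumF τ w n‖ *
          (‖(Complex.exp (-((π:ℂ)*I*w)) - Complex.exp ((π:ℂ)*I*w)) *
            (∏' n : ℕ, phiDenF τ w n)‖)⁻¹ := by
      funext w
      rw [hPhi]
      rw [norm_mul, norm_inv, norm_div, norm_mul]
      ring
    rw [heq]
    have h1 : Filter.Tendsto (fun w => ‖∏' n : ℕ, phiNumF τ w n‖)
        (nhdsWithin z₀ {z₀}ᶜ) (nhds ‖∏' n : ℕ, phiNumF τ z₀ n‖) :=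
      (hNcont.norm.tendsto).mono_left nhdsWithin_le_nhds
    have h3 : Filter.Tendsto (fun w =>
        ‖(Complex.exp (-((π:ℂ)*I*w)) - Complex.exp ((π:ℂ)*I*w)) *
            (∏' n : ℕ, phiDenF τ w n)‖) (nhdsWithin z₀ {z₀}ᶜ) (nhdsWithin 0 (Set.Ioi 0)) := by
      rw [tendsto_nhdsWithin_iff]
      constructor
      · have := ((hprecont.mul hDcont).norm.tendsto).mono_left
          (nhdsWithin_le_nhds (s := ({z₀}ᶜ : Set ℂ)))
        simp only [Pi.mul_apply] at this
        rwa [hh0, norm_zero] at this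
      · filter_upwards [hev] with w hw
        rw [Set.mem_Ioi, norm_pos_iff]
        exact mul_ne_zero (pre_ne_zero hw) (D_ne_zero hτ hw)
    have h2 : Filter.Tendsto (fun w =>
        (‖(Complex.exp (-((π:ℂ)*I*w)) - Complex.exp ((π:ℂ)*I*w)) *
            (∏' n : ℕ, phiDenF τ w n)‖)⁻¹) (nhdsWithin z₀ {z₀}ᶜ) Filter.atTop :=
      tendsto_inv_nhdsGT_zero.comp h3
    exact Filter.Tendsto.pos_mul_atTop (norm_pos_iff.mpr hN0) h1 h2
  · rintro z ⟨m, k, rfl⟩ n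
    exact phiNumF_ne_zero hτ m k n

end
end

section
/- With Z as above, for γ ∈ ℂ and R ∈ so(N,J): Z(γ+1,J;τ,N,o_N)(R) = ε(J,N)·Z(γ,J;τ,N,o_N)(R) and Z(γ+τ,J;τ,N,o_N)(R) = ε(J,N)·Z(γ,J;τ,N,o_N)(R), where ε(J,N) = (-1)^{Σ_{a∈Δ⁺}a}. -/
/- STATEMENT 13: Z(γ+1,J;τ,N,o_N)(R) = ε(J,N)·Z(γ,J;τ,N,o_N)(R) and
Z(γ+τ,J;τ,N,o_N)(R) = ε(J,N)·Z(γ,J;τ,N,o_N)(R), with ε(J,N) = (-1)^{Σ_{a∈Δ⁺}a}.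
Z is expressed in the diagonal model (rotation numbers a_j of J, R acting by 2iπr_j), where
Z(γ,J;τ,N,o_N)(R) = Tr(e^{γJ}e^R,W_{1,q}(N⊗ℂ))/Str(e^{γJ}e^R,S_N,o_N) is `Zdiag` below. -/

open Complex Real

noncomputable section

def Zstr {m : ℕ} (ν : ℂ) (a : Fin m → ℤ) (r : Fin m → ℂ) (γ : ℂ) : ℂ :=
  ν * ∏ j, (Complex.exp (-((π : ℂ) * I * ((a j : ℂ) * γ + r j))) -
      Complex.exp ((π : ℂ) * I * ((a j : ℂ) * γ + r j)))

/-- Z(γ,J;τ,N,o_N)(R) in the diagonal model: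
Tr(e^{γJ}e^R,W_{1,q}(N⊗ℂ)) / Str(e^{γJ}e^R,S_N,o_N), with the trace on W_{1,q}(N⊗ℂ)
computed from the eigenvalues e^{±2iπ(a_jγ+r_j)} of e^{γJ}e^R. -/
def Zdiag (τ : ℂ) {m : ℕ} (ν : ℂ) (a : Fin m → ℤ) (r : Fin m → ℂ) (γ : ℂ) : ℂ :=
  (∏ j, ∏' n : ℕ, phiNumF τ ((a j : ℂ) * γ + r j) n) /
    ((∏ j, ∏' n : ℕ, phiDenF τ ((a j : ℂ) * γ + r j) n) * Zstr ν a r γ)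

open Filter Finset

lemma qex_eq_sq (τ : ℂ) : qex τ = qhex τ ^ 2 := by
  rw [qex, qhex, ← Complex.exp_nat_mul]
  norm_num
  ring_nf

lemma norm_qex_lt (τ : ℂ) (hτ : 0 < τ.im) : ‖qex τ‖ < 1 := by
  rw [qex, Complex.norm_exp, Real.exp_lt_one_iff]
  have hπ := Real.pi_pos
  simp [Complex.mul_re, Complex.mul_im]
  nlinarith

-- multipliability + nonvanishing of ∏' (1 + c Q^n)
lemma multG {Q c : ℂ} (hQ : ‖Q‖ < 1) (h0 : ∀ n : ℕ, 1 + c * Q ^ n ≠ 0) :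
    Multipliable (fun n : ℕ => 1 + c * Q ^ n) ∧ (∏' n : ℕ, (1 + c * Q ^ n)) ≠ 0 := by
  have hlog : Summable (fun n : ℕ => Complex.log (1 + c * Q ^ n)) := by
    have hsum : Summable (fun n : ℕ => (3/2 : ℝ) * (‖c‖ * ‖Q‖ ^ n)) :=
      ((summable_geometric_of_lt_one (norm_nonneg Q) hQ).mul_left ‖c‖).mul_left _
    apply Summable.of_norm_bounded_eventually_nat hsum
    have h2 : Tendsto (fun n : ℕ => ‖c‖ * ‖Q‖ ^ n) atTop (nhds 0) := by
      simpa using (tendsto_pow_atTop_nhds_zero_of_norm_lt_one (by simpa using hQ)).const_mul ‖c‖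
    filter_upwards [h2.eventually_le_const (by norm_num : (0:ℝ) < 1/2)] with n hn
    have hb : ‖c * Q ^ n‖ ≤ 1/2 := by
      rw [norm_mul, norm_pow]; exact hn
    have := Complex.norm_log_one_add_half_le_self hb
    simpa [norm_mul, norm_pow] using this
  constructor
  · exact Complex.multipliable_of_summable_log hlog
  · have := Complex.cexp_tsum_eq_tprod (f := fun n : ℕ => 1 + c * Q ^ n) h0 hlog
    rw [← this]
    exact Complex.exp_ne_zero _

lemma tprod_shift_up {Q c : ℂ} (hQ : ‖Q‖ < 1) (a : ℕ)
    (h0 : ∀ n : ℕ, 1 + c * Q ^ n ≠ 0) :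
    (∏ k ∈ Finset.range a, (1 + c * Q ^ k)) * (∏' n : ℕ, (1 + c * Q ^ a * Q ^ n))
      = ∏' n : ℕ, (1 + c * Q ^ n) := by
  have h : (fun n : ℕ => 1 + c * Q ^ a * Q ^ n) = fun n => 1 + c * Q ^ (n + a) := by
    funext n; rw [pow_add]; ring
  rw [h]
  exact Multipliable.prod_mul_tprod_nat_mul' <| by
    have := (multG hQ (c := c * Q ^ a) (fun n => by rw [mul_assoc, ← pow_add, add_comm a n]; exact h0 (n+a))).1
    rwa [h] at this

lemma tprod_shift_down {Q c : ℂ} (hQ : ‖Q‖ < 1) (hQ0 : Q ≠ 0) (a : ℕ)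
    (h0 : ∀ n : ℕ, 1 + c * Q ^ n ≠ 0) :
    ∏' n : ℕ, (1 + c * (Q ^ a)⁻¹ * Q ^ n)
      = (∏ k ∈ Finset.range a, (1 + c * (Q ^ a)⁻¹ * Q ^ k)) * ∏' n : ℕ, (1 + c * Q ^ n) := by
  have key : ∀ n : ℕ, 1 + c * (Q ^ a)⁻¹ * Q ^ (n + a) = 1 + c * Q ^ n := fun n => by
    rw [pow_add]
    field_simp
  have hm : Multipliable (fun n : ℕ => 1 + c * (Q ^ a)⁻¹ * Q ^ (n + a)) := by
    have := (multG hQ h0).1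
    exact this.congr fun n => (key n).symm
  rw [← Multipliable.prod_mul_tprod_nat_mul' (f := fun n => 1 + c * (Q ^ a)⁻¹ * Q ^ n) (k := a) hm]
  congr 1
  exact tprod_congr key
def strF (z : ℂ) : ℂ := Complex.exp (-((π : ℂ) * I * z)) - Complex.exp ((π : ℂ) * I * z)
def Fz (τ z : ℂ) : ℂ := (∏' n : ℕ, phiNumF τ z n) / ((∏' n : ℕ, phiDenF τ z n) * strF z)

-- generic reflection term identity
lemma term_reflect {q u Q : ℂ} (hsq : Q = q ^ 2) (hu : u ≠ 0) (hQ0 : Q ≠ 0)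
    {a k : ℕ} (hk : k < a) (c e : ℂ) (hce : c * e = Q) :
    1 + e * u⁻¹ * (Q ^ a)⁻¹ * Q ^ k
      = (e * u⁻¹ * Q ^ k * (Q ^ a)⁻¹) * (1 + c * u * Q ^ (a - 1 - k)) := by
  have h2 : Q ^ (a - 1 - k) * Q ^ k = Q ^ (a - 1) := by
    rw [← pow_add]; congr 1; omega
  have h3 : Q * Q ^ (a - 1) = Q ^ a := by
    rw [← pow_succ']; congr 1; omega
  have key : (e * u⁻¹ * Q ^ k * (Q ^ a)⁻¹) * (c * u * Q ^ (a - 1 - k)) = 1 := by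
    have : (e * u⁻¹ * Q ^ k * (Q ^ a)⁻¹) * (c * u * Q ^ (a - 1 - k))
        = (c * e) * (u⁻¹ * u) * ((Q ^ (a - 1 - k) * Q ^ k) * (Q ^ a)⁻¹) := by ring
    rw [this, h2, inv_mul_cancel₀ hu, hce, mul_one, ← mul_assoc, h3,
      mul_inv_cancel₀ (pow_ne_zero _ hQ0)]
  calc 1 + e * u⁻¹ * (Q ^ a)⁻¹ * Q ^ k
      = (e * u⁻¹ * Q ^ k * (Q ^ a)⁻¹) * (c * u * Q ^ (a - 1 - k))
        + (e * u⁻¹ * Q ^ k * (Q ^ a)⁻¹) * 1 := by rw [key]; ring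
    _ = _ := by ring

lemma keyNat (τ : ℂ) (hτ : 0 < τ.im) (z : ℂ) (a : ℕ)
    (hs : strF z ≠ 0) (hs' : strF (z + (a : ℂ) * τ) ≠ 0)
    (hd : ∀ n, phiDenF τ z n ≠ 0) (hd' : ∀ n, phiDenF τ (z + (a : ℂ) * τ) n ≠ 0)
    (hn : ∀ n, phiNumF τ z n ≠ 0) (hn' : ∀ n, phiNumF τ (z + (a : ℂ) * τ) n ≠ 0) :
    Fz τ (z + (a : ℂ) * τ) = (-1 : ℂ) ^ a * Fz τ z := by
  set q := qhex τ with hqdef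
  set Q := qex τ with hQdef
  have hsq : Q = q ^ 2 := qex_eq_sq τ
  have hq0 : q ≠ 0 := Complex.exp_ne_zero _
  have hQ0 : Q ≠ 0 := Complex.exp_ne_zero _
  have hQlt : ‖Q‖ < 1 := norm_qex_lt τ hτ
  set v := Complex.exp ((π : ℂ) * I * z) with hvdef
  set u := Complex.exp (2 * (π : ℂ) * I * z) with hudef
  have hv0 : v ≠ 0 := Complex.exp_ne_zero _
  have hu0 : u ≠ 0 := Complex.exp_ne_zero _
  have huv : u = v ^ 2 := by
    rw [hudef, hvdef, ← Complex.exp_nat_mul]; norm_num; ring_nf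
  have hui : Complex.exp (-(2 * (π : ℂ) * I * z)) = u⁻¹ := by rw [Complex.exp_neg]
  -- shifted exponentials
  have hqa : Complex.exp ((π : ℂ) * I * ((a : ℂ) * τ)) = q ^ a := by
    rw [hqdef, qhex, ← Complex.exp_nat_mul]; congr 1; ring
  have hQa : Complex.exp (2 * (π : ℂ) * I * ((a : ℂ) * τ)) = Q ^ a := by
    rw [hQdef, qex, ← Complex.exp_nat_mul]; congr 1; ring
  have hu' : Complex.exp (2 * (π : ℂ) * I * (z + (a : ℂ) * τ)) = u * Q ^ a := by
    rw [mul_add, Complex.exp_add, hQa]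
  have hui' : Complex.exp (-(2 * (π : ℂ) * I * (z + (a : ℂ) * τ))) = u⁻¹ * (Q ^ a)⁻¹ := by
    rw [Complex.exp_neg, hu', mul_inv]
  have hv' : Complex.exp ((π : ℂ) * I * (z + (a : ℂ) * τ)) = v * q ^ a := by
    rw [mul_add, Complex.exp_add, hqa]
  have hvi' : Complex.exp (-((π : ℂ) * I * (z + (a : ℂ) * τ))) = v⁻¹ * (q ^ a)⁻¹ := by
    rw [Complex.exp_neg, hv', mul_inv]
  have hvi : Complex.exp (-((π : ℂ) * I * z)) = v⁻¹ := by rw [Complex.exp_neg]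
  -- q^(2n+1) = q * Q^n
  have hqpow : ∀ n : ℕ, q ^ (2 * n + 1) = q * Q ^ n := by
    intro n; rw [hsq, ← pow_mul, pow_succ, mul_comm (q ^ (2 * n)) q, mul_comm 2 n]
  -- factorizations
  set cA := q * u with hcA
  set cB := q * u⁻¹ with hcB
  set cC := (-Q) * u with hcC
  set cD := (-Q) * u⁻¹ with hcD
  have hNf : ∀ n, phiNumF τ z n = (1 + cA * Q ^ n) * (1 + cB * Q ^ n) := by
    intro n
    rw [phiNumF, hui, ← hudef, ← hqdef, hqpow n, hcA, hcB]; ring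
  have hDf : ∀ n, phiDenF τ z n = (1 + cC * Q ^ n) * (1 + cD * Q ^ n) := by
    intro n
    rw [phiDenF, hui, ← hudef, ← hQdef, pow_succ', hcC, hcD]; ring
  have hNf' : ∀ n, phiNumF τ (z + (a : ℂ) * τ) n
      = (1 + (cA * Q ^ a) * Q ^ n) * (1 + (cB * (Q ^ a)⁻¹) * Q ^ n) := by
    intro n
    rw [phiNumF, hu', hui', ← hqdef, hqpow n, hcA, hcB]; ring
  have hDf' : ∀ n, phiDenF τ (z + (a : ℂ) * τ) n
      = (1 + (cC * Q ^ a) * Q ^ n) * (1 + (cD * (Q ^ a)⁻¹) * Q ^ n) := by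
    intro n
    rw [phiDenF, hu', hui', ← hQdef, pow_succ', hcC, hcD]; ring
  -- nonvanishing of individual factors
  have hA0 : ∀ n, 1 + cA * Q ^ n ≠ 0 := fun n => left_ne_zero_of_mul (hNf n ▸ hn n)
  have hB0 : ∀ n, 1 + cB * Q ^ n ≠ 0 := fun n => right_ne_zero_of_mul (hNf n ▸ hn n)
  have hC0 : ∀ n, 1 + cC * Q ^ n ≠ 0 := fun n => left_ne_zero_of_mul (hDf n ▸ hd n)
  have hD0 : ∀ n, 1 + cD * Q ^ n ≠ 0 := fun n => right_ne_zero_of_mul (hDf n ▸ hd n)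
  have hA0' : ∀ n, 1 + (cA * Q ^ a) * Q ^ n ≠ 0 := fun n => left_ne_zero_of_mul (hNf' n ▸ hn' n)
  have hB0' : ∀ n, 1 + (cB * (Q ^ a)⁻¹) * Q ^ n ≠ 0 :=
    fun n => right_ne_zero_of_mul (hNf' n ▸ hn' n)
  have hC0' : ∀ n, 1 + (cC * Q ^ a) * Q ^ n ≠ 0 := fun n => left_ne_zero_of_mul (hDf' n ▸ hd' n)
  have hD0' : ∀ n, 1 + (cD * (Q ^ a)⁻¹) * Q ^ n ≠ 0 :=
    fun n => right_ne_zero_of_mul (hDf' n ▸ hd' n)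
  -- tprods
  obtain ⟨mA, hNA0⟩ := multG hQlt hA0
  obtain ⟨mB, hNB0⟩ := multG hQlt hB0
  obtain ⟨mC, hDC0⟩ := multG hQlt hC0
  obtain ⟨mD, hDD0⟩ := multG hQlt hD0
  obtain ⟨mA', _⟩ := multG hQlt hA0'
  obtain ⟨mB', _⟩ := multG hQlt hB0'
  obtain ⟨mC', _⟩ := multG hQlt hC0'
  obtain ⟨mD', _⟩ := multG hQlt hD0'
  set NA := ∏' n : ℕ, (1 + cA * Q ^ n) with hNAdef
  set NB := ∏' n : ℕ, (1 + cB * Q ^ n) with hNBdef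
  set DC := ∏' n : ℕ, (1 + cC * Q ^ n) with hDCdef
  set DD := ∏' n : ℕ, (1 + cD * Q ^ n) with hDDdef
  set NA' := ∏' n : ℕ, (1 + cA * Q ^ a * Q ^ n) with hNA'def
  set NB' := ∏' n : ℕ, (1 + cB * (Q ^ a)⁻¹ * Q ^ n) with hNB'def
  set DC' := ∏' n : ℕ, (1 + cC * Q ^ a * Q ^ n) with hDC'def
  set DD' := ∏' n : ℕ, (1 + cD * (Q ^ a)⁻¹ * Q ^ n) with hDD'def
  have hNsplit : (∏' n : ℕ, phiNumF τ z n) = NA * NB := by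
    rw [tprod_congr hNf]; exact Multipliable.tprod_mul mA mB
  have hDsplit : (∏' n : ℕ, phiDenF τ z n) = DC * DD := by
    rw [tprod_congr hDf]; exact Multipliable.tprod_mul mC mD
  have hNsplit' : (∏' n : ℕ, phiNumF τ (z + (a : ℂ) * τ) n) = NA' * NB' := by
    rw [tprod_congr hNf']; exact Multipliable.tprod_mul mA' mB'
  have hDsplit' : (∏' n : ℕ, phiDenF τ (z + (a : ℂ) * τ) n) = DC' * DD' := by
    rw [tprod_congr hDf']; exact Multipliable.tprod_mul mC' mD'
  -- finite products
  set PA := ∏ k ∈ Finset.range a, (1 + cA * Q ^ k) with hPAdef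
  set PC := ∏ k ∈ Finset.range a, (1 + cC * Q ^ k) with hPCdef
  set Cq := ∏ k ∈ Finset.range a, (q * u⁻¹ * Q ^ k * (Q ^ a)⁻¹) with hCqdef
  set P0 := ∏ k ∈ Finset.range a, (1 + (-1) * u * Q ^ k) with hP0def
  have hPA0 : PA ≠ 0 := Finset.prod_ne_zero_iff.mpr fun k _ => hA0 k
  have hPC0 : PC ≠ 0 := Finset.prod_ne_zero_iff.mpr fun k _ => hC0 k
  have hCq0 : Cq ≠ 0 := Finset.prod_ne_zero_iff.mpr fun k _ =>
    mul_ne_zero (mul_ne_zero (mul_ne_zero hq0 (inv_ne_zero hu0)) (pow_ne_zero _ hQ0))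
      (inv_ne_zero (pow_ne_zero _ hQ0))
  -- shift relations
  have hAshift : PA * NA' = NA := tprod_shift_up hQlt a hA0
  have hCshift : PC * DC' = DC := tprod_shift_up hQlt a hC0
  have hBshift : NB' = (∏ k ∈ Finset.range a, (1 + cB * (Q ^ a)⁻¹ * Q ^ k)) * NB :=
    tprod_shift_down hQlt hQ0 a hB0
  have hDshift : DD' = (∏ k ∈ Finset.range a, (1 + cD * (Q ^ a)⁻¹ * Q ^ k)) * DD :=
    tprod_shift_down hQlt hQ0 a hD0
  -- PB = Cq * PA
  have hPB : (∏ k ∈ Finset.range a, (1 + cB * (Q ^ a)⁻¹ * Q ^ k)) = Cq * PA := by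
    have h1 : ∀ k ∈ Finset.range a, 1 + cB * (Q ^ a)⁻¹ * Q ^ k
        = (q * u⁻¹ * Q ^ k * (Q ^ a)⁻¹) * (1 + cA * Q ^ (a - 1 - k)) := by
      intro k hk
      have := term_reflect hsq hu0 hQ0 (Finset.mem_range.mp hk) q q (by rw [hsq]; ring)
      rw [hcB, hcA]
      calc 1 + q * u⁻¹ * (Q ^ a)⁻¹ * Q ^ k
          = (q * u⁻¹ * Q ^ k * (Q ^ a)⁻¹) * (1 + q * u * Q ^ (a - 1 - k)) := this
        _ = _ := by ring
    rw [Finset.prod_congr rfl h1, Finset.prod_mul_distrib, hCqdef, hPAdef,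
      Finset.prod_range_reflect (fun k => 1 + cA * Q ^ k) a]
  -- PD = (-q)^a * Cq * P0
  have hPD : (∏ k ∈ Finset.range a, (1 + cD * (Q ^ a)⁻¹ * Q ^ k)) = (-q) ^ a * Cq * P0 := by
    have h1 : ∀ k ∈ Finset.range a, 1 + cD * (Q ^ a)⁻¹ * Q ^ k
        = ((-q) * (q * u⁻¹ * Q ^ k * (Q ^ a)⁻¹)) * (1 + (-1) * u * Q ^ (a - 1 - k)) := by
      intro k hk
      have := term_reflect hsq hu0 hQ0 (Finset.mem_range.mp hk) (-1) (-Q) (by ring)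
      rw [hcD]
      calc 1 + -Q * u⁻¹ * (Q ^ a)⁻¹ * Q ^ k
          = (-Q * u⁻¹ * Q ^ k * (Q ^ a)⁻¹) * (1 + (-1) * u * Q ^ (a - 1 - k)) := this
        _ = _ := by rw [hsq]; ring
    rw [Finset.prod_congr rfl h1, Finset.prod_mul_distrib, Finset.prod_mul_distrib,
      Finset.prod_const, Finset.card_range, hCqdef, hP0def,
      Finset.prod_range_reflect (fun k => 1 + (-1) * u * Q ^ k) a]
  -- P0 * (1 - Q^a u) = PC * (1 - u)
  have hP0PC : P0 * (1 - Q ^ a * u) = PC * (1 - u) := by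
    have e1 : (∏ k ∈ Finset.range (a + 1), (1 + (-1) * u * Q ^ k))
        = P0 * (1 + (-1) * u * Q ^ a) := by
      rw [Finset.prod_range_succ, hP0def]
    have e2 : (∏ k ∈ Finset.range (a + 1), (1 + (-1) * u * Q ^ k))
        = PC * (1 + (-1) * u * Q ^ 0) := by
      rw [Finset.prod_range_succ', hPCdef]
      congr 1
      apply Finset.prod_congr rfl
      intro k _
      rw [pow_succ', hcC]; ring
    have : P0 * (1 + (-1) * u * Q ^ a) = PC * (1 + (-1) * u * Q ^ 0) := by rw [← e1, e2]
    calc P0 * (1 - Q ^ a * u) = P0 * (1 + (-1) * u * Q ^ a) := by ring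
      _ = PC * (1 + (-1) * u * Q ^ 0) := this
      _ = PC * (1 - u) := by ring
  -- str values
  have hsz : strF z = v⁻¹ * (1 - u) := by
    rw [strF, hvi, ← hvdef, huv]
    field_simp
  have hsz' : strF (z + (a : ℂ) * τ) = v⁻¹ * (q ^ a)⁻¹ * (1 - Q ^ a * u) := by
    rw [strF, hvi', hv', huv, hsq, ← pow_mul, mul_comm 2 a, pow_mul]
    field_simp
  have h1mu : (1 : ℂ) - u ≠ 0 := by
    intro h; apply hs; rw [hsz, h, mul_zero]
  have h1Qau : (1 : ℂ) - Q ^ a * u ≠ 0 := by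
    intro h; apply hs'; rw [hsz', h, mul_zero]
  -- numerator of shifted
  have hnum' : NA' * NB' = Cq * (NA * NB) := by
    have hNA' : NA' = PA⁻¹ * NA := by
      rw [← hAshift, inv_mul_cancel_left₀ hPA0]
    rw [hNA', hBshift, hPB]
    field_simp
  -- denominator of shifted
  have hden' : (DC' * DD') * strF (z + (a : ℂ) * τ)
      = ((-1 : ℂ) ^ a * Cq) * ((DC * DD) * strF z) := by
    have hDC' : DC' = PC⁻¹ * DC := by
      rw [← hCshift, inv_mul_cancel_left₀ hPC0]
    rw [hDC', hDshift, hPD, hsz', hsz, neg_pow]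
    field_simp
    linear_combination hP0PC
  -- conclude
  rw [Fz, Fz, hNsplit, hDsplit, hNsplit', hDsplit', hnum', hden']
  have hinv : ((-1 : ℂ) ^ a)⁻¹ = (-1 : ℂ) ^ a := by rw [← inv_pow, inv_neg, inv_one]
  rw [show ((-1 : ℂ) ^ a * Cq * (DC * DD * strF z))
      = Cq * ((-1 : ℂ) ^ a * (DC * DD * strF z)) by ring,
    mul_div_mul_left _ _ hCq0, div_mul_eq_div_div_swap, div_eq_inv_mul, hinv]


lemma neg_one_zpow_inv (k : ℤ) : ((-1 : ℂ) ^ k)⁻¹ = (-1 : ℂ) ^ k := by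
  rw [← inv_zpow, inv_neg, inv_one]

lemma keyInt (τ : ℂ) (hτ : 0 < τ.im) (z : ℂ) (b : ℤ)
    (hs : strF z ≠ 0) (hs' : strF (z + (b : ℂ) * τ) ≠ 0)
    (hd : ∀ n, phiDenF τ z n ≠ 0) (hd' : ∀ n, phiDenF τ (z + (b : ℂ) * τ) n ≠ 0)
    (hn : ∀ n, phiNumF τ z n ≠ 0) (hn' : ∀ n, phiNumF τ (z + (b : ℂ) * τ) n ≠ 0) :
    Fz τ (z + (b : ℂ) * τ) = (-1 : ℂ) ^ b * Fz τ z := by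
  obtain ⟨n, hb | hb⟩ := b.eq_nat_or_neg
  · subst hb
    have hc : (((n : ℕ) : ℤ) : ℂ) = (n : ℂ) := by push_cast; rfl
    rw [hc] at hs' hd' hn' ⊢
    rw [zpow_natCast]
    exact keyNat τ hτ z n hs hs' hd hd' hn hn'
  · subst hb
    have hc : ((-(n : ℕ) : ℤ) : ℂ) = -(n : ℂ) := by push_cast; ring
    rw [hc] at hs' hd' hn' ⊢
    have hw : (z + -(n : ℂ) * τ) + (n : ℂ) * τ = z := by ring
    have hk := keyNat τ hτ (z + -(n : ℂ) * τ) n hs' (by rw [hw]; exact hs) hd'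
      (fun k => by rw [hw]; exact hd k) hn' (fun k => by rw [hw]; exact hn k)
    rw [hw] at hk
    rw [zpow_neg, zpow_natCast, hk,
      inv_mul_cancel_left₀ (pow_ne_zero _ (by norm_num : (-1 : ℂ) ≠ 0))]

lemma keyShift1 (τ z : ℂ) (k : ℤ) : Fz τ (z + (k : ℂ)) = (-1 : ℂ) ^ k * Fz τ z := by
  have hnumeq : ∀ n, phiNumF τ (z + (k : ℂ)) n = phiNumF τ z n := by
    intro n
    rw [phiNumF, phiNumF,
      show 2 * (π : ℂ) * I * (z + (k : ℂ)) = 2 * (π : ℂ) * I * z + (k : ℂ) * (2 * π * I) by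
        push_cast; ring,
      show -(2 * (π : ℂ) * I * z + (k : ℂ) * (2 * π * I))
          = -(2 * (π : ℂ) * I * z) + ((-k : ℤ) : ℂ) * (2 * π * I) by push_cast; ring,
      Complex.exp_add, Complex.exp_add, Complex.exp_int_mul_two_pi_mul_I,
      Complex.exp_int_mul_two_pi_mul_I, mul_one, mul_one]
  have hdeneq : ∀ n, phiDenF τ (z + (k : ℂ)) n = phiDenF τ z n := by
    intro n
    rw [phiDenF, phiDenF,
      show 2 * (π : ℂ) * I * (z + (k : ℂ)) = 2 * (π : ℂ) * I * z + (k : ℂ) * (2 * π * I) by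
        push_cast; ring,
      show -(2 * (π : ℂ) * I * z + (k : ℂ) * (2 * π * I))
          = -(2 * (π : ℂ) * I * z) + ((-k : ℤ) : ℂ) * (2 * π * I) by push_cast; ring,
      Complex.exp_add, Complex.exp_add, Complex.exp_int_mul_two_pi_mul_I,
      Complex.exp_int_mul_two_pi_mul_I, mul_one, mul_one]
  have hstr : strF (z + (k : ℂ)) = (-1 : ℂ) ^ k * strF z := by
    have h1 : Complex.exp ((π : ℂ) * I * (z + (k : ℂ)))
        = Complex.exp ((π : ℂ) * I * z) * (-1 : ℂ) ^ k := by
      rw [show (π : ℂ) * I * (z + (k : ℂ)) = (π : ℂ) * I * z + (k : ℂ) * ((π : ℂ) * I) by ring,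
        Complex.exp_add, Complex.exp_int_mul, Complex.exp_pi_mul_I]
    have h2 : Complex.exp (-((π : ℂ) * I * (z + (k : ℂ))))
        = Complex.exp (-((π : ℂ) * I * z)) * (-1 : ℂ) ^ k := by
      rw [Complex.exp_neg, h1, mul_inv, Complex.exp_neg, neg_one_zpow_inv]
    rw [strF, strF, h1, h2]; ring
  rw [Fz, Fz, tprod_congr hnumeq, tprod_congr hdeneq, hstr,
    show (∏' n : ℕ, phiDenF τ z n) * ((-1 : ℂ) ^ k * strF z)
      = (-1 : ℂ) ^ k * ((∏' n : ℕ, phiDenF τ z n) * strF z) by ring,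
    div_mul_eq_div_div_swap, div_eq_inv_mul, neg_one_zpow_inv]

lemma prod_neg_one_zpow {m : ℕ} (a : Fin m → ℤ) :
    (∏ j, (-1 : ℂ) ^ (a j)) = (-1 : ℂ) ^ (∑ j, a j) := by
  have : ∀ s : Finset (Fin m), (∏ j ∈ s, (-1 : ℂ) ^ (a j)) = (-1 : ℂ) ^ (∑ j ∈ s, a j) := by
    intro s
    induction s using Finset.induction with
    | empty => simp
    | insert j s h ih =>
      rw [Finset.prod_insert h, Finset.sum_insert h, ih,
        zpow_add₀ (by norm_num : (-1 : ℂ) ≠ 0)]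
  exact this _

lemma Zdiag_eq (τ : ℂ) {m : ℕ} (ν : ℂ) (a : Fin m → ℤ) (r : Fin m → ℂ) (γ : ℂ) :
    Zdiag τ ν a r γ = ν⁻¹ * ∏ j, Fz τ ((a j : ℂ) * γ + r j) := by
  rw [Zdiag, Zstr]
  simp only [Fz, strF]
  rw [Finset.prod_div_distrib, Finset.prod_mul_distrib,
    show (∏ j, ∏' n : ℕ, phiDenF τ ((a j : ℂ) * γ + r j) n) *
        (ν * ∏ j, (Complex.exp (-((π : ℂ) * I * ((a j : ℂ) * γ + r j))) -
          Complex.exp ((π : ℂ) * I * ((a j : ℂ) * γ + r j))))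
      = ν * ((∏ j, ∏' n : ℕ, phiDenF τ ((a j : ℂ) * γ + r j) n) *
        ∏ j, (Complex.exp (-((π : ℂ) * I * ((a j : ℂ) * γ + r j))) -
          Complex.exp ((π : ℂ) * I * ((a j : ℂ) * γ + r j)))) by ring,
    div_mul_eq_div_div_swap, div_eq_inv_mul]



theorem Zdiag_periodic (τ : ℂ) (hτ : 0 < τ.im) {m : ℕ} (ν : ℂ) (hν : ν = 1 ∨ ν = -1)
    (a : Fin m → ℤ) (r : Fin m → ℂ) (γ : ℂ)
    (hpre : ∀ j, Complex.exp (-((π : ℂ) * I * ((a j : ℂ) * γ + r j))) -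
      Complex.exp ((π : ℂ) * I * ((a j : ℂ) * γ + r j)) ≠ 0)
    (hpre' : ∀ j, Complex.exp (-((π : ℂ) * I * ((a j : ℂ) * (γ + τ) + r j))) -
      Complex.exp ((π : ℂ) * I * ((a j : ℂ) * (γ + τ) + r j)) ≠ 0)
    (hden : ∀ j n, phiDenF τ ((a j : ℂ) * γ + r j) n ≠ 0)
    (hden' : ∀ j n, phiDenF τ ((a j : ℂ) * (γ + τ) + r j) n ≠ 0)
    (hnum : ∀ j n, phiNumF τ ((a j : ℂ) * γ + r j) n ≠ 0)
    (hnum' : ∀ j n, phiNumF τ ((a j : ℂ) * (γ + τ) + r j) n ≠ 0) :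
    Zdiag τ ν a r (γ + 1) = (-1 : ℂ) ^ (∑ j, a j) * Zdiag τ ν a r γ ∧
    Zdiag τ ν a r (γ + τ) = (-1 : ℂ) ^ (∑ j, a j) * Zdiag τ ν a r γ := by
  constructor
  · rw [Zdiag_eq, Zdiag_eq]
    have h1 : ∀ j : Fin m, ((a j : ℂ) * (γ + 1) + r j)
        = ((a j : ℂ) * γ + r j) + ((a j : ℤ) : ℂ) := by intro j; push_cast; ring
    rw [Finset.prod_congr rfl (fun j _ => by rw [h1 j, keyShift1 τ _ (a j)]),
      Finset.prod_mul_distrib, prod_neg_one_zpow]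
    ring
  · rw [Zdiag_eq, Zdiag_eq]
    have h2 : ∀ j : Fin m, ((a j : ℂ) * (γ + τ) + r j)
        = ((a j : ℂ) * γ + r j) + ((a j : ℤ) : ℂ) * τ := by intro j; push_cast; ring
    have hkey : ∀ j ∈ Finset.univ, Fz τ ((a j : ℂ) * (γ + τ) + r j)
        = (-1 : ℂ) ^ (a j) * Fz τ ((a j : ℂ) * γ + r j) := by
      intro j _
      rw [h2 j]
      exact keyInt τ hτ _ (a j) (hpre j)
        (by rw [← h2 j]; exact hpre' j)
        (hden j) (fun n => by rw [← h2 j]; exact hden' j n)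
        (hnum j) (fun n => by rw [← h2 j]; exact hnum' j n)
    rw [Finset.prod_congr rfl hkey, Finset.prod_mul_distrib, prod_neg_one_zpow]
    ring

end
end

section
/- Let k be even, J ∈ so(N) with exp(J/k) = -Id_N in SO(N) (so all rotation numbers a of J satisfy a ≡ k/2 mod k), and γ ∈ ℂ with kγ = α + βτ where α is odd and β is even. Then for R ∈ so(N,J): Z(γ,J;τ,N,o_N)(R) = i^{dim N/2}·(-1)^{(α+β-1)(dim N)/4}·Os(J/k,o_N)^{α+β}· Tr(e^R, W_{2,q}(N⊗ℂ)) / Tr(e^R, S_N). -/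
/- STATEMENT 15: let k be even, exp(J/k) = -Id_N (so the rotation numbers of J are
a_j = k/2 + kA_j), and kγ = α + βτ with α odd, β even. Then for R ∈ so(N,J)
(acting by 2iπr_j, diagonal model):
Z(γ,J;τ,N,o_N)(R) = i^{dim N/2}·(-1)^{(α+β-1)(dim N)/4}·Os(J/k,o_N)^{α+β}
                     · Tr(e^R,W_{2,q}(N⊗ℂ)) / Tr(e^R,S_N),
where dim N = 2m, Os(J/k,o_N) = ν·(-1)^{Σ A_j},
Tr(e^R,W_{2,q}(N⊗ℂ)) = ∏_j ∏_{n≥1}(1-q^{n-1/2}e^{±2iπr_j})/∏_{n≥1}(1+q^{n}e^{±2iπr_j}),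
and Tr(e^R,S_N) = ∏_j (e^{-iπr_j}+e^{iπr_j}). -/

open Complex Real

noncomputable section

/-- Numerator factor of Tr(·,W_{2,q}): (1-q^{n-1/2}e^{2iπz})(1-q^{n-1/2}e^{-2iπz}). -/
def w2NumF (τ z : ℂ) (n : ℕ) : ℂ :=
  (1 - qhex τ ^ (2 * n + 1) * Complex.exp (2 * (π : ℂ) * I * z)) *
    (1 - qhex τ ^ (2 * n + 1) * Complex.exp (-(2 * (π : ℂ) * I * z)))

/-- Denominator factor of Tr(·,W_{2,q}): (1+q^{n}e^{2iπz})(1+q^{n}e^{-2iπz}). -/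
def w2DenF (τ z : ℂ) (n : ℕ) : ℂ :=
  (1 + qex τ ^ (n + 1) * Complex.exp (2 * (π : ℂ) * I * z)) *
    (1 + qex τ ^ (n + 1) * Complex.exp (-(2 * (π : ℂ) * I * z)))

namespace ZAux


lemma qhex_ne (τ : ℂ) : qhex τ ≠ 0 := Complex.exp_ne_zero _
lemma qex_ne (τ : ℂ) : qex τ ≠ 0 := Complex.exp_ne_zero _

lemma qex_eq_sq (τ : ℂ) : qex τ = qhex τ ^ 2 := by
  rw [qex, qhex, sq, ← Complex.exp_add]
  congr 1; ring

lemma qhex_pow_odd (τ : ℂ) (n : ℕ) : qhex τ ^ (2 * n + 1) = qhex τ * qex τ ^ n := by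
  rw [pow_succ, pow_mul, ← qex_eq_sq]; ring
lemma qex_norm_lt (τ : ℂ) (hτ : 0 < τ.im) : ‖qex τ‖ < 1 := by
  rw [qex, Complex.norm_exp, Real.exp_lt_one_iff]
  have : (2 * (π : ℂ) * I * τ).re = -(2 * π * τ.im) := by
    simp [Complex.mul_re, Complex.mul_im]
  rw [this]
  have := Real.pi_pos
  nlinarith

def Pp (τ c : ℂ) : ℂ := ∏' n : ℕ, (1 + c * qex τ ^ n)

lemma Pp_def (τ c : ℂ) : Pp τ c = ∏' n : ℕ, (1 + c * qex τ ^ n) := rfl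

lemma summable_log (τ : ℂ) (hτ : 0 < τ.im) (c : ℂ) :
    Summable fun n : ℕ => Complex.log (1 + c * qex τ ^ n) := by
  have hQ := qex_norm_lt τ hτ
  have hg : Summable fun n : ℕ => (3/2 : ℝ) * (‖c‖ * ‖qex τ‖ ^ n) :=
    ((summable_geometric_of_lt_one (norm_nonneg _) hQ).mul_left ‖c‖).mul_left _
  apply Summable.of_norm_bounded_eventually_nat hg
  have htend : Filter.Tendsto (fun n : ℕ => ‖c‖ * ‖qex τ‖ ^ n) Filter.atTop (nhds 0) := by
    simpa using (tendsto_pow_atTop_nhds_zero_of_norm_lt_one (by simpa using hQ)).const_mul ‖c‖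
  filter_upwards [htend.eventually_le_const (by norm_num : (0:ℝ) < 1/2)] with n hn
  have hcn : ‖c * qex τ ^ n‖ ≤ 1/2 := by
    rw [norm_mul, norm_pow]; exact hn
  calc ‖Complex.log (1 + c * qex τ ^ n)‖ ≤ 3/2 * ‖c * qex τ ^ n‖ :=
        Complex.norm_log_one_add_half_le_self hcn
    _ = 3/2 * (‖c‖ * ‖qex τ‖ ^ n) := by rw [norm_mul, norm_pow]

lemma multPp (τ : ℂ) (hτ : 0 < τ.im) (c : ℂ) (hc : ∀ n : ℕ, 1 + c * qex τ ^ n ≠ 0) :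
    Multipliable fun n : ℕ => 1 + c * qex τ ^ n :=
  Complex.multipliable_of_summable_log (summable_log τ hτ c)

lemma Pp_ne (τ : ℂ) (hτ : 0 < τ.im) (c : ℂ) (hc : ∀ n : ℕ, 1 + c * qex τ ^ n ≠ 0) :
    Pp τ c ≠ 0 := by
  have := Complex.cexp_tsum_eq_tprod (f := fun n : ℕ => 1 + c * qex τ ^ n) hc (summable_log τ hτ c)
  rw [Pp, ← this]
  exact Complex.exp_ne_zero _

set_option maxHeartbeats 1000000 in
lemma Pp_step (τ : ℂ) (hτ : 0 < τ.im) (c : ℂ) (hc : ∀ n : ℕ, 1 + c * qex τ ^ n ≠ 0) :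
    Pp τ c = (1 + c) * Pp τ (c * qex τ) := by
  have hc' : ∀ n : ℕ, 1 + (c * qex τ) * qex τ ^ n ≠ 0 := by
    intro n
    have h := hc (n + 1)
    rw [pow_succ'] at h
    ring_nf at h ⊢
    exact h
  have hm : Multipliable (fun n : ℕ => 1 + c * qex τ ^ (n + 1)) :=
    (multPp τ hτ (c * qex τ) hc').congr (fun n => by rw [pow_succ']; ring)
  have h1 := tprod_eq_zero_mul' (f := fun n : ℕ => 1 + c * qex τ ^ n) hm
  rw [Pp, h1]
  congr 1
  · simp
  · rw [Pp]
    exact tprod_congr fun n => by rw [pow_succ']; ring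




def Ez (z : ℂ) : ℂ := Complex.exp (2 * (π : ℂ) * I * z)
def eh (z : ℂ) : ℂ := Complex.exp ((π : ℂ) * I * z)

lemma Ez_ne (z : ℂ) : Ez z ≠ 0 := Complex.exp_ne_zero _
lemma eh_ne (z : ℂ) : eh z ≠ 0 := Complex.exp_ne_zero _

lemma Ez_eq_sq (z : ℂ) : Ez z = eh z ^ 2 := by
  rw [Ez, eh, sq, ← Complex.exp_add]; congr 1; ring

lemma Ez_add_tau (τ z : ℂ) : Ez (z + τ) = qex τ * Ez z := by
  rw [Ez, Ez, qex, ← Complex.exp_add]; congr 1; ring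

lemma eh_add_tau (τ z : ℂ) : eh (z + τ) = qhex τ * eh z := by
  rw [eh, eh, qhex, ← Complex.exp_add]; congr 1; ring

lemma Ez_add_one (z : ℂ) : Ez (z + 1) = Ez z := by
  rw [Ez, Ez, show 2 * (π : ℂ) * I * (z + 1) = 2 * π * I * z + 2 * π * I by ring,
    Complex.exp_add, Complex.exp_two_pi_mul_I, mul_one]

lemma eh_add_one (z : ℂ) : eh (z + 1) = -eh z := by
  rw [eh, eh, show (π : ℂ) * I * (z + 1) = π * I * z + π * I by ring,
    Complex.exp_add, Complex.exp_pi_mul_I, mul_neg_one]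

lemma Ez_add_int_tau (τ z : ℂ) (d : ℤ) : Ez (z + d * τ) = qex τ ^ d * Ez z := by
  rw [Ez, Ez, qex, show 2 * (π : ℂ) * I * (z + d * τ) = (d : ℂ) * (2 * π * I * τ) + 2 * π * I * z
    by ring, Complex.exp_add, Complex.exp_int_mul]

/-- orbit-invariant nonvanishing conditions -/
def GoodZ (τ z : ℂ) : Prop :=
  (∀ d : ℤ, 1 + qhex τ * qex τ ^ d * Ez z ≠ 0) ∧
  (∀ d : ℤ, 1 + qhex τ * qex τ ^ d * (Ez z)⁻¹ ≠ 0) ∧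
  (∀ d : ℤ, 1 - qex τ ^ d * Ez z ≠ 0) ∧
  (∀ d : ℤ, 1 - qex τ ^ d * (Ez z)⁻¹ ≠ 0)

lemma hypN {τ : ℂ} {w : ℂ} (h : ∀ d : ℤ, 1 + qhex τ * qex τ ^ d * w ≠ 0) (d : ℤ) :
    ∀ n : ℕ, 1 + (qhex τ * qex τ ^ d * w) * qex τ ^ n ≠ 0 := by
  intro n h0
  apply h (d + n)
  rw [zpow_add₀ (qex_ne τ), zpow_natCast]
  linear_combination h0

lemma hypD {τ : ℂ} {w : ℂ} (h : ∀ d : ℤ, 1 - qex τ ^ d * w ≠ 0) (d : ℤ) :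
    ∀ n : ℕ, 1 + (-(qex τ ^ d * w)) * qex τ ^ n ≠ 0 := by
  intro n h0
  apply h (d + n)
  rw [zpow_add₀ (qex_ne τ), zpow_natCast]
  linear_combination h0

def PN (τ w : ℂ) (d : ℤ) : ℂ := Pp τ (qhex τ * qex τ ^ d * w)
def PD (τ w : ℂ) (d : ℤ) : ℂ := Pp τ (-(qex τ ^ d * w))

lemma PN_arg (τ w : ℂ) (d : ℤ) : qhex τ * qex τ ^ d * w * qex τ = qhex τ * qex τ ^ (d + 1) * w := by
  rw [zpow_add₀ (qex_ne τ), zpow_one]; ring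

lemma PN_step (τ : ℂ) (hτ : 0 < τ.im) {w : ℂ} (h : ∀ d : ℤ, 1 + qhex τ * qex τ ^ d * w ≠ 0)
    (d : ℤ) : PN τ w d = (1 + qhex τ * qex τ ^ d * w) * PN τ w (d + 1) := by
  rw [PN, Pp_step τ hτ _ (hypN h d), PN, PN_arg]

lemma PD_step (τ : ℂ) (hτ : 0 < τ.im) {w : ℂ} (h : ∀ d : ℤ, 1 - qex τ ^ d * w ≠ 0)
    (d : ℤ) : PD τ w d = (1 - qex τ ^ d * w) * PD τ w (d + 1) := by
  rw [PD, Pp_step τ hτ _ (hypD h d),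
    show -(qex τ ^ d * w) * qex τ = -(qex τ ^ (d + 1) * w) by
      rw [zpow_add₀ (qex_ne τ), zpow_one]; ring, ← PD]
  ring

lemma PN_ne (τ : ℂ) (hτ : 0 < τ.im) {w : ℂ} (h : ∀ d : ℤ, 1 + qhex τ * qex τ ^ d * w ≠ 0)
    (d : ℤ) : PN τ w d ≠ 0 := Pp_ne τ hτ _ (hypN h d)

lemma PD_ne (τ : ℂ) (hτ : 0 < τ.im) {w : ℂ} (h : ∀ d : ℤ, 1 - qex τ ^ d * w ≠ 0)
    (d : ℤ) : PD τ w d ≠ 0 := Pp_ne τ hτ _ (hypD h d)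

lemma PN_mulQ (τ w : ℂ) (d : ℤ) : PN τ (qex τ * w) d = PN τ w (d + 1) := by
  rw [PN, PN]; congr 1; rw [zpow_add₀ (qex_ne τ), zpow_one]; ring

lemma PN_invQ (τ w : ℂ) (d : ℤ) : PN τ ((qex τ)⁻¹ * w) d = PN τ w (d - 1) := by
  rw [PN, PN]; congr 1
  rw [sub_eq_add_neg, zpow_add₀ (qex_ne τ), zpow_neg, zpow_one]; ring

lemma PD_mulQ (τ w : ℂ) (d : ℤ) : PD τ (qex τ * w) d = PD τ w (d + 1) := by
  rw [PD, PD]; congr 2; rw [zpow_add₀ (qex_ne τ), zpow_one]; ring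

lemma PD_invQ (τ w : ℂ) (d : ℤ) : PD τ ((qex τ)⁻¹ * w) d = PD τ w (d - 1) := by
  rw [PD, PD]; congr 2
  rw [sub_eq_add_neg, zpow_add₀ (qex_ne τ), zpow_neg, zpow_one]; ring

lemma tprod_phiNum (τ : ℂ) (hτ : 0 < τ.im) (z : ℂ)
    (h1 : ∀ d : ℤ, 1 + qhex τ * qex τ ^ d * Ez z ≠ 0)
    (h2 : ∀ d : ℤ, 1 + qhex τ * qex τ ^ d * (Ez z)⁻¹ ≠ 0) :
    ∏' n : ℕ, phiNumF τ z n = PN τ (Ez z) 0 * PN τ (Ez z)⁻¹ 0 := by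
  rw [PN, PN, Pp_def, Pp_def,
    ← Multipliable.tprod_mul (multPp τ hτ _ (hypN h1 0)) (multPp τ hτ _ (hypN h2 0))]
  refine tprod_congr fun n => ?_
  rw [phiNumF, qhex_pow_odd, ← Ez, show Complex.exp (-(2 * (π : ℂ) * I * z)) = (Ez z)⁻¹ by
    rw [Ez, ← Complex.exp_neg], zpow_zero]
  ring

lemma tprod_phiDen (τ : ℂ) (hτ : 0 < τ.im) (z : ℂ)
    (h3 : ∀ d : ℤ, 1 - qex τ ^ d * Ez z ≠ 0)
    (h4 : ∀ d : ℤ, 1 - qex τ ^ d * (Ez z)⁻¹ ≠ 0) :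
    ∏' n : ℕ, phiDenF τ z n = PD τ (Ez z) 1 * PD τ (Ez z)⁻¹ 1 := by
  rw [PD, PD, Pp_def, Pp_def,
    ← Multipliable.tprod_mul (multPp τ hτ _ (hypD h3 1)) (multPp τ hτ _ (hypD h4 1))]
  refine tprod_congr fun n => ?_
  rw [phiDenF, ← Ez, show Complex.exp (-(2 * (π : ℂ) * I * z)) = (Ez z)⁻¹ by
    rw [Ez, ← Complex.exp_neg], zpow_one, pow_succ']
  ring

def sf (z : ℂ) : ℂ := Complex.exp (-((π : ℂ) * I * z)) - Complex.exp ((π : ℂ) * I * z)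

lemma sf_eq (z : ℂ) : sf z = (eh z)⁻¹ - eh z := by
  rw [sf, eh, ← Complex.exp_neg]

lemma sf_factor (z : ℂ) : sf z = (eh z)⁻¹ * (1 - Ez z) := by
  rw [sf_eq, Ez_eq_sq]
  field_simp [eh_ne]

lemma sf_ne {τ z : ℂ} (h3 : ∀ d : ℤ, 1 - qex τ ^ d * Ez z ≠ 0) : sf z ≠ 0 := by
  rw [sf_factor]
  refine mul_ne_zero (inv_ne_zero (eh_ne z)) ?_
  have := h3 0
  rwa [zpow_zero, one_mul] at this

def Ff (τ z : ℂ) : ℂ := (∏' n : ℕ, phiNumF τ z n) / ((∏' n : ℕ, phiDenF τ z n) * sf z)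

lemma good_shift (τ z : ℂ) (d : ℤ) (h : GoodZ τ z) : GoodZ τ (z + d * τ) := by
  obtain ⟨g1, g2, g3, g4⟩ := h
  refine ⟨fun d' h0 => g1 (d' + d) ?_, fun d' h0 => g2 (d' - d) ?_,
          fun d' h0 => g3 (d' + d) ?_, fun d' h0 => g4 (d' - d) ?_⟩ <;>
    rw [Ez_add_int_tau] at h0
  · rw [zpow_add₀ (qex_ne τ)]; linear_combination h0
  · rw [mul_inv, ← zpow_neg] at h0
    rw [show d' - d = d' + -d by ring, zpow_add₀ (qex_ne τ)]; linear_combination h0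
  · rw [zpow_add₀ (qex_ne τ)]; linear_combination h0
  · rw [mul_inv, ← zpow_neg] at h0
    rw [show d' - d = d' + -d by ring, zpow_add₀ (qex_ne τ)]; linear_combination h0


lemma F_step (τ : ℂ) (hτ : 0 < τ.im) (z : ℂ) (h : GoodZ τ z) : Ff τ (z + τ) = -Ff τ z := by
  have h' : GoodZ τ (z + τ) := by
    have := good_shift τ z 1 h
    rwa [show z + (1 : ℤ) * τ = z + τ by push_cast; ring] at this
  obtain ⟨g1', g2', g3', g4'⟩ := h'
  obtain ⟨g1, g2, g3, g4⟩ := h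
  have hX1 : PN τ (Ez z) 1 ≠ 0 := PN_ne τ hτ g1 1
  have hX2 : PN τ (Ez z)⁻¹ 0 ≠ 0 := PN_ne τ hτ g2 0
  have hY1 : PD τ (Ez z) 2 ≠ 0 := PD_ne τ hτ g3 2
  have hY2 : PD τ (Ez z)⁻¹ 1 ≠ 0 := PD_ne τ hτ g4 1
  have h1u : 1 - Ez z ≠ 0 := by have := g3 0; rwa [zpow_zero, one_mul] at this
  have h1Qu : 1 - qhex τ ^ 2 * Ez z ≠ 0 := by
    have := g3 1; rwa [zpow_one, qex_eq_sq] at this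
  have h1uinv : 1 - (Ez z)⁻¹ ≠ 0 := by have := g4 0; rwa [zpow_zero, one_mul] at this
  have hu := Ez_ne z
  have hs := eh_ne z
  have hp := qhex_ne τ
  rw [Ff, Ff, tprod_phiNum τ hτ (z + τ) g1' g2', tprod_phiDen τ hτ (z + τ) g3' g4',
    tprod_phiNum τ hτ z g1 g2, tprod_phiDen τ hτ z g3 g4,
    sf_factor (z + τ), sf_factor z, eh_add_tau, Ez_add_tau,
    show (qex τ * Ez z)⁻¹ = (qex τ)⁻¹ * (Ez z)⁻¹ from mul_inv _ _,
    PN_mulQ, PD_mulQ, PN_invQ, PD_invQ]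
  norm_num
  rw [PN_step τ hτ g1 0, PD_step τ hτ g3 1, PN_step τ hτ g2 (-1), PD_step τ hτ g4 0]
  norm_num
  rw [qex_eq_sq]
  have hB : PD τ (Ez z) 2 * ((1 - (Ez z)⁻¹) * PD τ (Ez z)⁻¹ 1) *
      ((eh z)⁻¹ * (qhex τ)⁻¹ * (1 - qhex τ ^ 2 * Ez z)) ≠ 0 :=
    mul_ne_zero (mul_ne_zero hY1 (mul_ne_zero h1uinv hY2))
      (mul_ne_zero (mul_ne_zero (inv_ne_zero hs) (inv_ne_zero hp)) h1Qu)
  have hD : (1 - qhex τ ^ 2 * Ez z) * PD τ (Ez z) 2 * PD τ (Ez z)⁻¹ 1 *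
      ((eh z)⁻¹ * (1 - Ez z)) ≠ 0 :=
    mul_ne_zero (mul_ne_zero (mul_ne_zero h1Qu hY1) hY2)
      (mul_ne_zero (inv_ne_zero hs) h1u)
  rw [← neg_div, div_eq_div_iff hB hD]
  field_simp
  ring

lemma negone_ne : (-1 : ℂ) ≠ 0 := by norm_num

lemma sf_add_one (z : ℂ) : sf (z + 1) = -sf z := by
  rw [sf_eq, sf_eq, eh_add_one, inv_neg]; ring

lemma F_one (τ z : ℂ) : Ff τ (z + 1) = -Ff τ z := by
  have hnum : ∀ n, phiNumF τ (z + 1) n = phiNumF τ z n := by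
    intro n
    rw [phiNumF, phiNumF,
      show -(2 * (π : ℂ) * I * (z + 1)) = -(2 * π * I * z) + -(2 * π * I) by ring,
      show 2 * (π : ℂ) * I * (z + 1) = 2 * π * I * z + 2 * π * I by ring,
      Complex.exp_add, Complex.exp_add, Complex.exp_two_pi_mul_I,
      show Complex.exp (-(2 * (π : ℂ) * I)) = 1 by
        rw [Complex.exp_neg, Complex.exp_two_pi_mul_I, inv_one], mul_one, mul_one]
  have hden : ∀ n, phiDenF τ (z + 1) n = phiDenF τ z n := by
    intro n
    rw [phiDenF, phiDenF,
      show -(2 * (π : ℂ) * I * (z + 1)) = -(2 * π * I * z) + -(2 * π * I) by ring,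
      show 2 * (π : ℂ) * I * (z + 1) = 2 * π * I * z + 2 * π * I by ring,
      Complex.exp_add, Complex.exp_add, Complex.exp_two_pi_mul_I,
      show Complex.exp (-(2 * (π : ℂ) * I)) = 1 by
        rw [Complex.exp_neg, Complex.exp_two_pi_mul_I, inv_one], mul_one, mul_one]
  rw [Ff, Ff, tprod_congr hnum, tprod_congr hden, sf_add_one, mul_neg, div_neg]

lemma F_int (τ z : ℂ) (n : ℤ) : Ff τ (z + (n : ℂ)) = (-1 : ℂ) ^ n * Ff τ z := by
  induction n using Int.induction_on with
  | zero => simp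
  | succ k ih =>
    have h1 := F_one τ (z + ((k : ℤ) : ℂ))
    rw [show z + ((k : ℤ) : ℂ) + 1 = z + ((k + 1 : ℤ) : ℂ) by push_cast; ring, ih] at h1
    rw [h1, zpow_add₀ negone_ne, zpow_one]; ring
  | pred k ih =>
    have h1 := F_one τ (z + ((-k - 1 : ℤ) : ℂ))
    rw [show z + ((-k - 1 : ℤ) : ℂ) + 1 = z + ((-k : ℤ) : ℂ) by push_cast; ring, ih] at h1
    have h2 : Ff τ (z + ((-k - 1 : ℤ) : ℂ)) = -((-1 : ℂ) ^ (-(k:ℤ)) * Ff τ z) := by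
      linear_combination h1
    rw [h2, show (-(k:ℤ) - 1 : ℤ) = -(k:ℤ) + -1 by ring, zpow_add₀ negone_ne, zpow_neg_one]
    norm_num

lemma F_tau (τ : ℂ) (hτ : 0 < τ.im) (z : ℂ) (h : GoodZ τ z) (d : ℤ) :
    Ff τ (z + (d : ℂ) * τ) = (-1 : ℂ) ^ d * Ff τ z := by
  induction d using Int.induction_on with
  | zero => simp
  | succ k ih =>
    have hg : GoodZ τ (z + ((k : ℤ) : ℂ) * τ) := good_shift τ z k h
    have h1 := F_step τ hτ _ hg
    rw [show z + ((k : ℤ) : ℂ) * τ + τ = z + (((k + 1 : ℤ)) : ℂ) * τ by push_cast; ring] at h1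
    rw [h1, ih, zpow_add₀ negone_ne, zpow_one]; ring
  | pred k ih =>
    have hg : GoodZ τ (z + ((-k - 1 : ℤ) : ℂ) * τ) := good_shift τ z (-k - 1) h
    have h1 := F_step τ hτ _ hg
    rw [show z + ((-k - 1 : ℤ) : ℂ) * τ + τ = z + ((-k : ℤ) : ℂ) * τ by push_cast; ring, ih] at h1
    have h2 : Ff τ (z + ((-k - 1 : ℤ) : ℂ) * τ) = -((-1 : ℂ) ^ (-(k:ℤ)) * Ff τ z) := by
      linear_combination h1
    rw [h2, show (-(k:ℤ) - 1 : ℤ) = -(k:ℤ) + -1 by ring, zpow_add₀ negone_ne, zpow_neg_one]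
    norm_num

lemma F_half (τ r : ℂ) :
    Ff τ (r + 1/2) = Complex.I * ((∏' n : ℕ, w2NumF τ r n) / ((∏' n : ℕ, w2DenF τ r n) *
      (Complex.exp (-((π : ℂ) * I * r)) + Complex.exp ((π : ℂ) * I * r)))) := by
  have hnum : ∀ n, phiNumF τ (r + 1/2) n = w2NumF τ r n := by
    intro n
    rw [phiNumF, w2NumF,
      show -(2 * (π : ℂ) * I * (r + 1/2)) = -(2 * π * I * r) + -(π * I) by ring,
      show 2 * (π : ℂ) * I * (r + 1/2) = 2 * π * I * r + π * I by ring,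
      Complex.exp_add, Complex.exp_add, Complex.exp_pi_mul_I,
      show Complex.exp (-((π : ℂ) * I)) = -1 by
        rw [Complex.exp_neg, Complex.exp_pi_mul_I]; norm_num]
    ring
  have hden : ∀ n, phiDenF τ (r + 1/2) n = w2DenF τ r n := by
    intro n
    rw [phiDenF, w2DenF,
      show -(2 * (π : ℂ) * I * (r + 1/2)) = -(2 * π * I * r) + -(π * I) by ring,
      show 2 * (π : ℂ) * I * (r + 1/2) = 2 * π * I * r + π * I by ring,
      Complex.exp_add, Complex.exp_add, Complex.exp_pi_mul_I,
      show Complex.exp (-((π : ℂ) * I)) = -1 by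
        rw [Complex.exp_neg, Complex.exp_pi_mul_I]; norm_num]
    ring
  have hsf : sf (r + 1/2) =
      -Complex.I * (Complex.exp (-((π : ℂ) * I * r)) + Complex.exp ((π : ℂ) * I * r)) := by
    rw [sf, show -((π : ℂ) * I * (r + 1/2)) = -(π * I * r) + -(π/2 * I) by ring,
      show (π : ℂ) * I * (r + 1/2) = π * I * r + π/2 * I by ring,
      Complex.exp_add, Complex.exp_add,
      show Complex.exp ((π : ℂ)/2 * I) = Complex.I by
        rw [Complex.exp_mul_I, Complex.cos_pi_div_two, Complex.sin_pi_div_two]; ring,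
      show Complex.exp (-((π : ℂ)/2 * I)) = -Complex.I by
        rw [show -((π : ℂ)/2 * I) = -(π/2) * I by ring, Complex.exp_mul_I, Complex.cos_neg,
          Complex.sin_neg, Complex.cos_pi_div_two, Complex.sin_pi_div_two]; ring]
    ring
  rw [Ff, tprod_congr hnum, tprod_congr hden, hsf]
  simp only [div_eq_mul_inv, mul_inv, inv_neg, Complex.inv_I]
  ring

lemma F_main (τ : ℂ) (hτ : 0 < τ.im) (r : ℂ) (t d : ℤ)
    (h : GoodZ τ (r + 1/2 + (t : ℂ) + (d : ℂ) * τ)) :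
    Ff τ (r + 1/2 + (t : ℂ) + (d : ℂ) * τ) = (-1 : ℂ) ^ (d + t) *
      (Complex.I * ((∏' n : ℕ, w2NumF τ r n) / ((∏' n : ℕ, w2DenF τ r n) *
        (Complex.exp (-((π : ℂ) * I * r)) + Complex.exp ((π : ℂ) * I * r))))) := by
  have hg : GoodZ τ (r + 1/2 + (t : ℂ)) := by
    have := good_shift τ _ (-d) h
    rwa [show r + 1/2 + (t : ℂ) + (d : ℂ) * τ + ((-d : ℤ) : ℂ) * τ = r + 1/2 + (t : ℂ) by
      push_cast; ring] at this
  have h1 := F_tau τ hτ _ hg d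
  have h2 := F_int τ (r + 1/2) t
  rw [h1, h2, F_half τ r, zpow_add₀ negone_ne]
  ring

lemma flipN (τ : ℂ) {w : ℂ} (d : ℤ) (h0 : 1 + qhex τ * qex τ ^ d * w = 0) :
    1 + qhex τ * qex τ ^ (-d - 1) * w⁻¹ = 0 := by
  have hinv : w⁻¹ = -(qhex τ * qex τ ^ d) :=
    inv_eq_of_mul_eq_one_left (by linear_combination -h0)
  rw [hinv]
  have e1 : qex τ ^ (-d - 1) * qex τ ^ d = (qex τ)⁻¹ := by
    rw [← zpow_add₀ (qex_ne τ), show -d - 1 + d = -1 by ring, zpow_neg_one]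
  have e2 : qhex τ ^ 2 * (qex τ)⁻¹ = 1 := by
    rw [← qex_eq_sq]; exact mul_inv_cancel₀ (qex_ne τ)
  linear_combination (-(qhex τ ^ 2)) * e1 - e2

lemma flipD (τ : ℂ) {w : ℂ} (d : ℤ) (h0 : 1 - qex τ ^ d * w = 0) :
    1 - qex τ ^ (-d) * w⁻¹ = 0 := by
  have hinv : w⁻¹ = qex τ ^ d := inv_eq_of_mul_eq_one_left (by linear_combination -h0)
  rw [hinv]
  have e1 : qex τ ^ (-d) * qex τ ^ d = 1 := by
    rw [← zpow_add₀ (qex_ne τ), show -d + d = 0 by ring, zpow_zero]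
  linear_combination -e1

lemma buildGood (τ z : ℂ)
    (hn1 : ∀ n : ℕ, 1 + qhex τ * qex τ ^ (n : ℤ) * Ez z ≠ 0)
    (hn2 : ∀ n : ℕ, 1 + qhex τ * qex τ ^ (n : ℤ) * (Ez z)⁻¹ ≠ 0)
    (hd1 : ∀ n : ℕ, 1 - qex τ ^ ((n : ℤ) + 1) * Ez z ≠ 0)
    (hd2 : ∀ n : ℕ, 1 - qex τ ^ ((n : ℤ) + 1) * (Ez z)⁻¹ ≠ 0)
    (h0 : 1 - Ez z ≠ 0) : GoodZ τ z := by
  have h0' : 1 - (Ez z)⁻¹ ≠ 0 := by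
    intro hh
    apply h0
    have : (Ez z)⁻¹ = 1 := by linear_combination -hh
    rw [inv_eq_one] at this
    rw [this]; ring
  refine ⟨fun d => ?_, fun d => ?_, fun d => ?_, fun d => ?_⟩
  · rcases le_or_gt 0 d with hd | hd
    · obtain ⟨n, rfl⟩ := Int.eq_ofNat_of_zero_le hd
      exact hn1 n
    · intro hc
      have h1 := flipN τ d hc
      obtain ⟨n, hn⟩ : ∃ n : ℕ, -d - 1 = (n : ℤ) := ⟨(-d - 1).toNat, by omega⟩
      rw [hn] at h1
      exact hn2 n h1
  · rcases le_or_gt 0 d with hd | hd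
    · obtain ⟨n, rfl⟩ := Int.eq_ofNat_of_zero_le hd
      exact hn2 n
    · intro hc
      have h1 := flipN τ d hc
      rw [inv_inv] at h1
      obtain ⟨n, hn⟩ : ∃ n : ℕ, -d - 1 = (n : ℤ) := ⟨(-d - 1).toNat, by omega⟩
      rw [hn] at h1
      exact hn1 n h1
  · rcases lt_trichotomy d 0 with hd | hd | hd
    · intro hc
      have h1 := flipD τ d hc
      obtain ⟨n, hn⟩ : ∃ n : ℕ, -d = (n : ℤ) + 1 := ⟨(-d - 1).toNat, by omega⟩
      rw [hn] at h1
      exact hd2 n h1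
    · rw [hd, zpow_zero, one_mul]; exact h0
    · obtain ⟨n, hn⟩ : ∃ n : ℕ, d = (n : ℤ) + 1 := ⟨(d - 1).toNat, by omega⟩
      rw [hn]; exact hd1 n
  · rcases lt_trichotomy d 0 with hd | hd | hd
    · intro hc
      have h1 := flipD τ d hc
      rw [inv_inv] at h1
      obtain ⟨n, hn⟩ : ∃ n : ℕ, -d = (n : ℤ) + 1 := ⟨(-d - 1).toNat, by omega⟩
      rw [hn] at h1
      exact hd1 n h1
    · rw [hd, zpow_zero, one_mul]; exact h0'
    · obtain ⟨n, hn⟩ : ∃ n : ℕ, d = (n : ℤ) + 1 := ⟨(d - 1).toNat, by omega⟩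
      rw [hn]; exact hd2 n

lemma prod_zpow_negone {m : ℕ} (f : Fin m → ℤ) :
    (∏ j, (-1 : ℂ) ^ (f j)) = (-1 : ℂ) ^ (∑ j, f j) := by
  induction m with
  | zero => simp
  | succ k ih =>
    rw [Fin.prod_univ_castSucc, Fin.sum_univ_castSucc, ih, zpow_add₀ negone_ne]

lemma negone_zpow_congr {m n : ℤ} (h : ∃ c, m - n = 2 * c) : (-1 : ℂ) ^ m = (-1 : ℂ) ^ n := by
  obtain ⟨c, hc⟩ := h
  have hm : m = n + 2 * c := by omega
  rw [hm, zpow_add₀ negone_ne, zpow_mul]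
  norm_num

lemma one_sub_Ez_ne {z : ℂ} (h : sf z ≠ 0) : 1 - Ez z ≠ 0 := by
  intro h0
  exact h (by rw [sf_factor, h0, mul_zero])

end ZAux

open ZAux in
theorem Zdiag_special_case_W2 (τ : ℂ) (hτ : 0 < τ.im) {m : ℕ} (ν : ℂ) (hν : ν = 1 ∨ ν = -1)
    (k e α β σ : ℤ) (hke : k = 2 * e) (hα : Odd α) (hβ : Even β) (hσ : α + β - 1 = 2 * σ)
    (γ : ℂ) (hkγ : (k : ℂ) * γ = (α : ℂ) + (β : ℂ) * τ)
    (A : Fin m → ℤ) (r : Fin m → ℂ)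
    -- rotation numbers a_j = k/2 + kA_j of J:
    (a : Fin m → ℤ) (ha : ∀ j, a j = e + k * A j)
    -- definedness hypotheses:
    (hpre : ∀ j, Complex.exp (-((π : ℂ) * I * ((a j : ℂ) * γ + r j))) -
      Complex.exp ((π : ℂ) * I * ((a j : ℂ) * γ + r j)) ≠ 0)
    (hden : ∀ j n, phiDenF τ ((a j : ℂ) * γ + r j) n ≠ 0)
    (hnum : ∀ j n, phiNumF τ ((a j : ℂ) * γ + r j) n ≠ 0)
    (hden2 : ∀ j n, w2DenF τ (r j) n ≠ 0)
    (htrS : ∀ j, Complex.exp (-((π : ℂ) * I * r j)) + Complex.exp ((π : ℂ) * I * r j) ≠ 0) :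
    Zdiag τ ν a r γ =
      I ^ m * (-1 : ℂ) ^ (σ * (m : ℤ)) * (ν * (-1 : ℂ) ^ (∑ j, A j)) ^ (α + β) *
        ((∏ j, ∏' n : ℕ, w2NumF τ (r j) n) / (∏ j, ∏' n : ℕ, w2DenF τ (r j) n)) /
        (∏ j, (Complex.exp (-((π : ℂ) * I * r j)) + Complex.exp ((π : ℂ) * I * r j))) := by
  classical
  obtain ⟨b, hb⟩ := hβ
  have hαβ : α + β = 2 * σ + 1 := by omega
  have hkC : ((k : ℤ) : ℂ) = 2 * (e : ℂ) := by exact_mod_cast congrArg (Int.cast : ℤ → ℂ) hke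
  have hbC : (β : ℂ) = (b : ℂ) + b := by exact_mod_cast congrArg (Int.cast : ℤ → ℂ) hb
  have hσC : (α : ℂ) + (β : ℂ) - 1 = 2 * (σ : ℂ) := by exact_mod_cast hσ
  have hγ2 := hkγ
  rw [hkC] at hγ2
  have hzj : ∀ j, ((a j : ℤ) : ℂ) * γ + r j =
      r j + 1/2 + ((A j * α + σ - b : ℤ) : ℂ) + (((2 * A j + 1) * b : ℤ) : ℂ) * τ := by
    intro j
    have haC : ((a j : ℤ) : ℂ) = (e : ℂ) + 2 * (e : ℂ) * (A j : ℂ) := by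
      have h' : a j = e + 2 * e * A j := by rw [ha j, hke]
      exact_mod_cast congrArg (Int.cast : ℤ → ℂ) h'
    rw [haC]
    push_cast
    linear_combination ((A j : ℂ) + 1/2) * hγ2 + (1/2) * hσC +
      (((A j : ℂ) + 1/2) * τ - 1/2) * hbC
  have hgood : ∀ j, GoodZ τ (((a j : ℤ) : ℂ) * γ + r j) := by
    intro j
    apply buildGood
    · intro n hcon
      have hh := hnum j n
      rw [phiNumF] at hh
      apply left_ne_zero_of_mul hh
      rw [qhex_pow_odd]
      rw [zpow_natCast] at hcon
      simp only [Ez] at hcon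
      linear_combination hcon
    · intro n hcon
      have hh := hnum j n
      rw [phiNumF] at hh
      apply right_ne_zero_of_mul hh
      rw [qhex_pow_odd, Complex.exp_neg]
      rw [zpow_natCast] at hcon
      simp only [Ez] at hcon
      linear_combination hcon
    · intro n hcon
      have hh := hden j n
      rw [phiDenF] at hh
      apply left_ne_zero_of_mul hh
      rw [show ((n : ℤ) + 1) = ((n + 1 : ℕ) : ℤ) by push_cast; ring, zpow_natCast] at hcon
      simp only [Ez] at hcon
      linear_combination hcon
    · intro n hcon
      have hh := hden j n
      rw [phiDenF] at hh
      apply right_ne_zero_of_mul hh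
      rw [Complex.exp_neg]
      rw [show ((n : ℤ) + 1) = ((n + 1 : ℕ) : ℤ) by push_cast; ring, zpow_natCast] at hcon
      simp only [Ez] at hcon
      linear_combination hcon
    · exact one_sub_Ez_ne (hpre j)
  have hFj : ∀ j, Ff τ (((a j : ℤ) : ℂ) * γ + r j) =
      (-1 : ℂ) ^ ((2 * A j + 1) * b + (A j * α + σ - b)) *
      (Complex.I * ((∏' n : ℕ, w2NumF τ (r j) n) / ((∏' n : ℕ, w2DenF τ (r j) n) *
        (Complex.exp (-((π : ℂ) * I * r j)) + Complex.exp ((π : ℂ) * I * r j))))) := by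
    intro j
    have hg := hgood j
    rw [hzj j] at hg ⊢
    exact F_main τ hτ (r j) _ _ hg
  have hZ : Zdiag τ ν a r γ = ν⁻¹ * ∏ j, Ff τ (((a j : ℤ) : ℂ) * γ + r j) := by
    rw [Zdiag, Zstr]
    simp only [Ff, sf]
    rw [Finset.prod_div_distrib, Finset.prod_mul_distrib]
    simp only [div_eq_mul_inv, mul_inv]
    ring
  rw [hZ, Finset.prod_congr rfl (fun j _ => hFj j), Finset.prod_mul_distrib,
    Finset.prod_mul_distrib, prod_zpow_negone, Finset.prod_const, Finset.card_univ,
    Fintype.card_fin, Finset.prod_div_distrib, Finset.prod_mul_distrib]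
  have hsum : (∑ j, ((2 * A j + 1) * b + (A j * α + σ - b))) =
      (∑ j, A j) * (α + β) + σ * (m : ℤ) := by
    have hc : ∀ j ∈ Finset.univ, (2 * A j + 1) * b + (A j * α + σ - b) =
        (α + 2 * b) * A j + σ := fun j _ => by ring
    rw [Finset.sum_congr rfl hc, Finset.sum_add_distrib, ← Finset.mul_sum, Finset.sum_const,
      Finset.card_univ, Fintype.card_fin, nsmul_eq_mul]
    have h2 : α + 2 * b = α + β := by omega
    rw [h2]
    ring
  rw [hsum]
  have hνinv : ν⁻¹ = ν := by rcases hν with rfl | rfl <;> norm_num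
  have hνp : ν ^ (α + β) = ν := by
    rcases hν with rfl | rfl
    · simp
    · rw [show (α + β) = 1 + 2 * σ by omega, zpow_add₀ negone_ne, zpow_one, zpow_mul]
      norm_num
  rw [mul_zpow, ← zpow_mul, hνp, hνinv, zpow_add₀ negone_ne]
  ring


end
end

section
/- Let N be an even-dimensional Euclidean space, ζ ∈ SO(N) with ζ^k = Id_N and Id_N - ζ invertible, o_N an orientation on N, and let ζ̂ be the unique lift of ζ to Spin(N) such that the orientation determined by the top symbol term of σ(ζ̂) ∈ ΛN coincides with o_N. Suppose J ∈ so(N) commutes with ζ, exp(J/k) = ζ in SO(N). If N is 2-dimensional with J e₁ = 2πa e₂, J e₂ = -2πa e₁ (a ∈ {1,…,k-1}) and o_N = e₁∧e₂, then ζ̂^k = (-1)^a, Os(J/k, o_N) = 1, and Os(J/k,o_N)^k · ε(J,N) = ζ̂^k. -/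
/- STATEMENT 17: 2-dimensional case of the compatibility of spin lifts and orientation signs.
N = ℝe₁⊕ℝe₂ with o_N = e₁∧e₂, realized on the spinor module ℂ² via E1 = iσ₁, E2 = iσ₂;
J ∈ so(N) with Je₁ = 2πa·e₂, Je₂ = -2πa·e₁, a ∈ {1,…,k-1}, so that
exp_{Spin}(J/k) = ζ̂ = cos(πa/k) + sin(πa/k)·E1E2, with sin(πa/k) > 0, whence the
orientation determined by the top symbol term of σ(ζ̂) coincides with o_N, i.e.
Os(J/k,o_N) = 1. Then ζ̂^k = (-1)^a, Os(J/k,o_N) = 1, and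
Os(J/k,o_N)^k · ε(J,N) = ζ̂^k (with ε(J,N) = (-1)^a, Δ⁺ = {a}). -/

open Complex Matrix

noncomputable section

def E1 : Matrix (Fin 2) (Fin 2) ℂ := !![0, I; I, 0]

def E2 : Matrix (Fin 2) (Fin 2) ℂ := !![0, 1; -1, 0]

/-- `ζ̂ = exp_{Spin}(J/k) = cos(πa/k) + sin(πa/k)·e₁e₂`. -/
def zetaHat (a k : ℕ) : Matrix (Fin 2) (Fin 2) ℂ :=
  (Real.cos (Real.pi * a / k) : ℂ) • (1 : Matrix (Fin 2) (Fin 2) ℂ) +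
    (Real.sin (Real.pi * a / k) : ℂ) • (E1 * E2)

/-- The orientation sign `Os`: +1 if the top symbol coefficient (here sin(πa/k)) is
positive, i.e. the orientation determined by ζ̂ agrees with o_N; -1 otherwise. -/
def osSign (s : ℝ) : ℂ := if 0 < s then 1 else -1

theorem spin_lift_two_dim (a k : ℕ) (ha : 1 ≤ a) (hak : a ≤ k - 1) (hk : 2 ≤ k) :
    zetaHat a k = NormedSpace.exp (((Real.pi * a / k : ℝ) : ℂ) • (E1 * E2)) ∧
    zetaHat a k ^ k = (-1 : ℂ) ^ a • (1 : Matrix (Fin 2) (Fin 2) ℂ) ∧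
    osSign (Real.sin (Real.pi * a / k)) = 1 ∧
    (osSign (Real.sin (Real.pi * a / k)) ^ k * (-1 : ℂ) ^ a) •
        (1 : Matrix (Fin 2) (Fin 2) ℂ) = zetaHat a k ^ k := by
  have hk0 : (0:ℝ) < k := by positivity
  set θ : ℝ := Real.pi * a / k with hθ
  have hθ0 : 0 < θ := by
    apply div_pos _ hk0
    have : (0:ℝ) < a := by exact_mod_cast ha
    positivity
  have hθπ : θ < Real.pi := by
    rw [hθ, div_lt_iff₀ hk0]
    have hak' : (a:ℝ) < k := by
      have : a < k := lt_of_le_of_lt hak (Nat.sub_lt (by omega) one_pos)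
      exact_mod_cast this
    nlinarith [Real.pi_pos]
  have hsin : 0 < Real.sin θ := Real.sin_pos_of_pos_of_lt_pi hθ0 hθπ
  have hE : E1 * E2 = Matrix.diagonal ![-I, I] := by
    ext i j
    fin_cases i <;> fin_cases j <;>
      simp [E1, E2, Matrix.mul_apply, Fin.sum_univ_two, Matrix.diagonal]
  have h11 : (Real.cos θ : ℂ) + (Real.sin θ : ℂ) * I = Complex.exp ((θ:ℂ) * I) := by
    rw [Complex.exp_mul_I, Complex.ofReal_cos, Complex.ofReal_sin]
  have h00 : (Real.cos θ : ℂ) - (Real.sin θ : ℂ) * I = Complex.exp (-((θ:ℂ) * I)) := by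
    rw [show -((θ:ℂ) * I) = (((-θ : ℝ)):ℂ) * I by push_cast; ring,
      Complex.exp_mul_I, Complex.ofReal_neg, Complex.cos_neg, Complex.sin_neg,
      Complex.ofReal_cos, Complex.ofReal_sin]
    ring
  have hzeta : zetaHat a k =
      Matrix.diagonal (fun i => Complex.exp ((![-((θ:ℂ) * I), (θ:ℂ) * I]) i)) := by
    rw [zetaHat, hE]
    ext i j
    fin_cases i <;> fin_cases j <;>
      simp [Matrix.diagonal, ← h00, ← h11, ← hθ] <;> push_cast [← hθ] <;> ring
  have hv : ((θ:ℝ):ℂ) • ![-I, I] = ![-((θ:ℂ) * I), (θ:ℂ) * I] := by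
    funext i; fin_cases i <;> simp <;> ring
  have hexp : zetaHat a k = NormedSpace.exp (((θ : ℝ) : ℂ) • (E1 * E2)) := by
    rw [hE, ← Matrix.diagonal_smul, hv, Matrix.exp_diagonal, hzeta]
    congr 1
    rw [Pi.exp_def]
    funext i
    rw [← Complex.exp_eq_exp_ℂ]
  have hka : (k : ℂ) * θ = Real.pi * a := by
    have hk0' : (k:ℂ) ≠ 0 := by exact_mod_cast hk0.ne'
    rw [hθ]
    push_cast
    field_simp
  have he : Complex.exp ((θ:ℂ) * I) ^ k = (-1 : ℂ) ^ a := by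
    rw [← Complex.exp_nat_mul,
      show (k:ℂ) * ((θ:ℂ) * I) = (a:ℂ) * ((Real.pi : ℂ) * I) by
        rw [show (k:ℂ) * ((θ:ℂ) * I) = ((k:ℂ) * θ) * I by ring, hka]; ring,
      Complex.exp_nat_mul, Complex.exp_pi_mul_I]
  have he' : Complex.exp (-((θ:ℂ) * I)) ^ k = (-1 : ℂ) ^ a := by
    rw [← Complex.exp_nat_mul,
      show (k:ℂ) * (-((θ:ℂ) * I)) = (a:ℂ) * (-((Real.pi : ℂ) * I)) by
        rw [show (k:ℂ) * (-((θ:ℂ) * I)) = -(((k:ℂ) * θ) * I) by ring, hka]; ring,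
      Complex.exp_nat_mul, Complex.exp_neg, Complex.exp_pi_mul_I]
    norm_num
  have hpow : zetaHat a k ^ k = (-1 : ℂ) ^ a • (1 : Matrix (Fin 2) (Fin 2) ℂ) := by
    rw [hzeta, Matrix.diagonal_pow]
    ext i j
    fin_cases i <;> fin_cases j <;>
      simp [Matrix.diagonal, Pi.pow_apply, he, he']
  refine ⟨by rw [hexp], hpow, by simp [osSign, hsin], ?_⟩
  rw [show osSign (Real.sin θ) = 1 by simp [osSign, hsin]]
  simp [hpow]

end
end
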